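/- arXiv:1905.01130 — 6 statements merged into one kernel-verified Lean document; each statement's English description precedes it below -/
import Mathlib

section
/- Let [X,d,m] be a metric random walk space with an invariant and reversible probability measure ν which is ergodic, and suppose m_x ≪ ν for all x ∈ X. (i) Suppose hypothesis (H1) holds: for every ν-null set B ⊂ X there exist points x_1,…,x_N ∈ X∖B, ν-measurable sets Ω_1,…,Ω_N ⊂ X with X = ⋃_{i=1}^N Ω_i, and α > 0 such that dm_{x_i}/dν ≥ α ν-a.e. on Ω_i for i = 1,…,N. Then for every p ≥ 1 there exists c > 0 such that ‖u‖_{L^p(X,ν)} ≤ c · ( (∫_X ∫_X |u(y) − u(x)|^p dm_x(y) dν(x))^{1/p} + |∫_X u dν| ) for all u ∈ L^p(X,ν). (ii) Let 1 ≤ p < q and suppose hypothesis (H2) holds: for every ν-null set B ⊂ X there exist points x_1,…,x_N ∈ X∖B and ν-measurable sets Ω_1,…,Ω_N ⊂ X with X = ⋃_{i=1}^N Ω_i such that, with g_i := dm_{x_i}/dν on Ω_i, the function g_i^{−p/(q−p)} belongs to L¹(Ω_i,ν) for i = 1,…,N. Then there exists c > 0 such that ‖u‖_{L^p(X,ν)}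 ≤ c · ( (∫_X ∫_X |u(y) − u(x)|^q dm_x(y) dν(x))^{1/q} + |∫_X u dν| ) for all u ∈ L^q(X,ν). -/
open MeasureTheory ENNReal Filter Set Topology

noncomputable section

variable {X : Type*} [MeasurableSpace X]

/-- The double integral `∫∫ |u(y) − u(x)| dm_x(y) dν(x)`. -/
def nlEnergy (m : X → Measure X) (ν : Measure X) (u : X → ℝ) : ℝ≥0∞ :=
  ∫⁻ x, ∫⁻ y, ENNReal.ofReal |u y - u x| ∂(m x) ∂ν

/-- The `m`-total variation `TV_m(u) = (1/2) ∫∫ |u(y) − u(x)| dm_x(y) dν(x)`. -/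
def TVm (m : X → Measure X) (ν : Measure X) (u : X → ℝ) : ℝ≥0∞ :=
  2⁻¹ * nlEnergy m ν u

/-- `u ∈ BV_m(X,ν)`: a measurable function with finite nonlocal energy. -/
def MemBVm (m : X → Measure X) (ν : Measure X) (u : X → ℝ) : Prop :=
  Measurable u ∧ nlEnergy m ν u < ⊤

/-- `u ∈ BV_m^0(X,ν)`: `u ∈ BV_m(X,ν)` vanishing a.e. outside a set `A` with `0 < ν A < ν X`. -/
def MemBVm0 (m : X → Measure X) (ν : Measure X) (u : X → ℝ) : Prop :=
  MemBVm m ν u ∧ ∃ A : Set X, MeasurableSet A ∧ 0 < ν A ∧ ν A < ν Set.univ ∧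
    ∀ᵐ x ∂ν, x ∉ A → u x = 0

/-- The `m`-interaction `L_m(A,B) = ∫_A m_x(B) dν(x)`. -/
def Lm (m : X → Measure X) (ν : Measure X) (A B : Set X) : ℝ≥0∞ :=
  ∫⁻ x in A, m x B ∂ν

/-- The `m`-perimeter `P_m(E) = L_m(E, X∖E)`. -/
def Pm (m : X → Measure X) (ν : Measure X) (E : Set X) : ℝ≥0∞ :=
  Lm m ν E Eᶜ

/-- `ν` is invariant and reversible for `m`. -/
def Reversible (m : X → Measure X) (ν : Measure X) : Prop :=
  ∀ F : X → X → ℝ≥0∞, Measurable (Function.uncurry F) →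
    ∫⁻ x, ∫⁻ y, F x y ∂(m x) ∂ν = ∫⁻ y, ∫⁻ x, F x y ∂(m y) ∂ν

/-- `x ↦ m_x(A)` is measurable for every Borel set `A`. -/
def MeasurableKernel (m : X → Measure X) : Prop :=
  ∀ A : Set X, MeasurableSet A → Measurable fun x => m x A

/-- The measure `ν ⊗ m_x` on `X × X`, given by `(ν ⊗ m_x)(U) = ∫ m_x(U_x) dν(x)`. -/
def nuOtimes (m : X → Measure X) (ν : Measure X) : Measure (X × X) :=
  ν.bind fun x => (m x).map (Prod.mk x)

/-- The `m`-divergence `div_m z (x) = (1/2) ∫ (z(x,y) − z(y,x)) dm_x(y)`. -/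
def divm (m : X → Measure X) (z : X → X → ℝ) (x : X) : ℝ :=
  2⁻¹ * ∫ y, (z x y - z y x) ∂(m x)

/-- The multivalued sign function. -/
def signSet (r : ℝ) : Set ℝ :=
  if 0 < r then {1} else if r < 0 then {-1} else Set.Icc (-1) 1

/-- `[X,d,m]` is `m`-connected with respect to `ν`. -/
def MConnected (m : X → Measure X) (ν : Measure X) : Prop :=
  ∀ A B : Set X, MeasurableSet A → MeasurableSet B → 0 < ν A → 0 < ν B →
    A ∪ B = Set.univ → 0 < Lm m ν A B

/-- `ν` is ergodic for `m`. -/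
def ErgodicRW (m : X → Measure X) (ν : Measure X) : Prop :=
  ∀ B : Set X, MeasurableSet B → (∀ x ∈ B, m x B = 1) → ν B = 0 ∨ ν B = 1

/-- `v ∈ ∂F_m(u)`, where `F_m(w) = TV_m(w)` for `w ∈ L² ∩ BV_m` and `+∞` otherwise.
This unfolds the subdifferential inequality: it forces `F_m(u) < ∞` and the inequality
is trivial for test functions `w` with `F_m(w) = ∞`. -/
def subdiffFm (m : X → Measure X) (ν : Measure X) (u v : X → ℝ) : Prop :=
  MemLp u 2 ν ∧ MemLp v 2 ν ∧ MemBVm m ν u ∧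
    ∀ w : X → ℝ, MemLp w 2 ν → MemBVm m ν w →
      (TVm m ν u).toReal + ∫ x, v x * (w x - u x) ∂ν ≤ (TVm m ν w).toReal

/-- `(λ, u)` is an `m`-eigenpair of the 1-Laplacian. -/
def IsEigenpair (m : X → Measure X) (ν : Measure X) (lam : ℝ) (u : X → ℝ) : Prop :=
  eLpNorm u 1 ν = 1 ∧
    ∃ ξ : X → ℝ, MemLp ξ ⊤ ν ∧ (∀ᵐ x ∂ν, ξ x ∈ signSet (u x)) ∧
      subdiffFm m ν u fun x => lam * ξ x

/-- The `m`-Cheeger constant of a set `Ω`. -/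
def h1m (m : X → Measure X) (ν : Measure X) (Ω : Set X) : ℝ≥0∞ :=
  sInf {r : ℝ≥0∞ | ∃ E : Set X, MeasurableSet E ∧ E ⊆ Ω ∧ 0 < ν E ∧ r = Pm m ν E / ν E}

/-- `Ω` is `m`-calibrable. -/
def Calibrable (m : X → Measure X) (ν : Measure X) (Ω : Set X) : Prop :=
  h1m m ν Ω = Pm m ν Ω / ν Ω

/-- The `m`-Cheeger constant of the whole space (for a probability measure `ν`). -/
def cheegerConst (m : X → Measure X) (ν : Measure X) : ℝ≥0∞ :=
  sInf {r : ℝ≥0∞ | ∃ D : Set X, MeasurableSet D ∧ 0 < ν D ∧ ν D < 1 ∧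
    r = Pm m ν D / min (ν D) (ν Dᶜ)}

/-- The Dirichlet energy functional `H_m(u) = (1/2) ∫∫ (u(x) − u(y))² dm_x(y) dν(x)`. -/
def Hm (m : X → Measure X) (ν : Measure X) (u : X → ℝ) : ℝ≥0∞ :=
  2⁻¹ * ∫⁻ x, ∫⁻ y, ENNReal.ofReal ((u x - u y) ^ 2) ∂(m x) ∂ν

end


noncomputable section PoincareAux

open ProbabilityTheory

variable {X : Type*} [MeasurableSpace X]

lemma aux_kernel_meas (m : X → Measure X) (hprob : ∀ x, IsProbabilityMeasure (m x))
    (hker : MeasurableKernel m) {f : X → X → ℝ≥0∞} (hf : Measurable (Function.uncurry f)) :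
    Measurable fun x => ∫⁻ y, f x y ∂(m x) := by
  let κ : Kernel X X := ⟨m, Measure.measurable_of_measurable_coe m hker⟩
  have : IsMarkovKernel κ := ⟨fun a => hprob a⟩
  exact hf.lintegral_kernel_prod_right (κ := κ)

lemma aux_no_split (m : X → Measure X) (hprob : ∀ x, IsProbabilityMeasure (m x))
    (hker : MeasurableKernel m) (ν : Measure X)
    (herg : ErgodicRW m ν) (habs : ∀ x, m x ≪ ν)
    (D : Set X) (hD : MeasurableSet D)
    (h : ∀ᵐ x ∂ν, x ∈ D → m x Dᶜ = 0) : ν D = 0 ∨ ν D = 1 := by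
  set B := D ∩ {x | m x D = 1} with hBdef
  have hBm : MeasurableSet B := hD.inter ((hker D hD) (measurableSet_singleton 1))
  have hDB : ν (D \ B) = 0 := by
    rw [ae_iff] at h
    refine measure_mono_null ?_ h
    intro x hx
    simp only [mem_diff, hBdef, mem_inter_iff, mem_setOf_eq, not_and] at hx ⊢
    intro hxD
    have h1 : m x D ≠ 1 := hx.2 hx.1
    have := hprob x
    exact h1 ((prob_compl_eq_zero_iff hD).mp (hxD hx.1))
  have hB1 : ∀ x ∈ B, m x B = 1 := by
    intro x hx
    have := hprob x
    have h0 : m x (D \ B) = 0 := habs x hDB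
    have h2 : m x D = 1 := hx.2
    have h3 : m x D ≤ m x B + m x (D \ B) := by
      refine (measure_mono (by intro y hy; by_cases hyB : y ∈ B <;> simp [hyB, hy] : D ⊆ B ∪ (D \ B))).trans (measure_union_le _ _)
    rw [h0, add_zero, h2] at h3
    exact le_antisymm prob_le_one h3
  have hνDB : ν D = ν B := by
    have : ν D ≤ ν B + ν (D \ B) := by
      refine (measure_mono (by intro y hy; by_cases hyB : y ∈ B <;> simp [hyB, hy] : D ⊆ B ∪ (D \ B))).trans (measure_union_le _ _)
    rw [hDB, add_zero] at this
    exact le_antisymm this (measure_mono inter_subset_left)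
  rw [hνDB]
  exact herg B hBm hB1

lemma elp_eq (ν : Measure X) {p : ℝ} (hp : 0 < p) (f : X → ℝ) :
    eLpNorm f (ENNReal.ofReal p) ν = (∫⁻ x, ENNReal.ofReal (|f x| ^ p) ∂ν) ^ (1 / p) := by
  rw [eLpNorm_eq_lintegral_rpow_enorm_toReal (by simp [hp, hp.ne']) (by simp)]
  rw [ENNReal.toReal_ofReal hp.le]
  congr 1
  refine lintegral_congr fun x => ?_
  rw [Real.enorm_eq_ofReal_abs, ← ENNReal.ofReal_rpow_of_nonneg (abs_nonneg _) hp.le]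

lemma abs_rpow_eq_zero {r q : ℝ} (hq : 0 < q) (h : ENNReal.ofReal (|r| ^ q) = 0) : r = 0 := by
  rw [ENNReal.ofReal_eq_zero] at h
  have h2 : (0:ℝ) ≤ |r| ^ q := Real.rpow_nonneg (abs_nonneg r) q
  have h3 : |r| ^ q = 0 := le_antisymm h h2
  rw [Real.rpow_eq_zero (abs_nonneg r) hq.ne'] at h3
  exact abs_eq_zero.mp h3

lemma const_of_zero_energy (m : X → Measure X) (hprob : ∀ x, IsProbabilityMeasure (m x))
    (hker : MeasurableKernel m) (ν : Measure X) [IsProbabilityMeasure ν]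
    (herg : ErgodicRW m ν) (habs : ∀ x, m x ≪ ν) {q : ℝ} (hq : 0 < q)
    (w : X → ℝ) (hw : Measurable w) (hfin : (Set.range w).Finite)
    (hE : ∫⁻ x, ∫⁻ y, ENNReal.ofReal (|w y - w x| ^ q) ∂(m x) ∂ν = 0) :
    ∃ a : ℝ, ∀ᵐ x ∂ν, w x = a := by
  have hmeas : ∀ x : X, Measurable fun y => ENNReal.ofReal (|w y - w x| ^ q) :=
    fun x => ((Real.continuous_rpow_const hq.le).measurable.comp ((hw.sub measurable_const).abs)).ennreal_ofReal
  -- for a.e. x, m x {y | w y ≠ w x} = 0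
  have h1 : ∀ᵐ x ∂ν, (∫⁻ y, ENNReal.ofReal (|w y - w x| ^ q) ∂(m x)) = 0 := by
    have hFm : Measurable fun x => ∫⁻ y, ENNReal.ofReal (|w y - w x| ^ q) ∂(m x) := by
      let κ : Kernel X X := ⟨m, Measure.measurable_of_measurable_coe m hker⟩
      have : IsMarkovKernel κ := ⟨fun a => hprob a⟩
      exact Measurable.lintegral_kernel_prod_right (κ := κ)
        (f := fun x y => ENNReal.ofReal (|w y - w x| ^ q))
        ((Real.continuous_rpow_const hq.le).measurable.comp (((hw.comp measurable_snd).sub (hw.comp measurable_fst)).abs)).ennreal_ofReal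
    exact (lintegral_eq_zero_iff hFm).mp hE
  have h2 : ∀ᵐ x ∂ν, m x {y | w y ≠ w x} = 0 := by
    filter_upwards [h1] with x hx
    have h0 := ae_iff.mp ((lintegral_eq_zero_iff (hmeas x)).mp hx)
    refine measure_mono_null ?_ h0
    intro y hy
    simp only [mem_setOf_eq, Pi.zero_apply] at hy ⊢
    intro hc
    exact hy (sub_eq_zero.mp (abs_rpow_eq_zero hq hc))
  set s : Finset ℝ := hfin.toFinset with hs
  have hDa : ∀ a : ℝ, ν (w ⁻¹' {a}) = 0 ∨ ν (w ⁻¹' {a}) = 1 := by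
    intro a
    refine aux_no_split m hprob hker ν herg habs _ (hw (measurableSet_singleton a)) ?_
    filter_upwards [h2] with x hx hxD
    have hxa : w x = a := hxD
    have hset : (w ⁻¹' {a})ᶜ = {y | w y ≠ w x} := by
      ext y; simp [hxa]
    rw [hset]
    exact hx
  by_cases hall : ∀ a ∈ s, ν (w ⁻¹' {a}) = 0
  · exfalso
    have hcov : (Set.univ : Set X) ⊆ ⋃ a ∈ s, w ⁻¹' {a} := by
      intro x _
      simp only [mem_iUnion, mem_preimage, mem_singleton_iff]
      exact ⟨w x, by simp [hs, Set.Finite.mem_toFinset, mem_range_self], rfl⟩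
    have h3 : (1 : ℝ≥0∞) ≤ ∑ a ∈ s, ν (w ⁻¹' {a}) := by
      calc (1:ℝ≥0∞) = ν Set.univ := (measure_univ).symm
        _ ≤ ν (⋃ a ∈ s, w ⁻¹' {a}) := measure_mono hcov
        _ ≤ ∑ a ∈ s, ν (w ⁻¹' {a}) := measure_biUnion_finset_le s _
    rw [Finset.sum_congr rfl hall] at h3
    simp at h3
  · push_neg at hall
    obtain ⟨a, _, ha⟩ := hall
    have h1' : ν (w ⁻¹' {a}) = 1 := (hDa a).resolve_left ha
    refine ⟨a, ?_⟩
    rw [ae_iff]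
    have : {x | ¬ w x = a} = (w ⁻¹' {a})ᶜ := by ext y; simp
    rw [this, prob_compl_eq_zero_iff (hw (measurableSet_singleton a))]
    exact h1'

lemma est_H1 (ν : Measure X) [IsFiniteMeasure ν] (μ : Measure X) [IsFiniteMeasure μ]
    (hμν : μ ≪ ν) {Ω : Set X} (hΩ : MeasurableSet Ω) {α : ℝ} (hα : 0 < α)
    (hd : ∀ᵐ x ∂ν, x ∈ Ω → ENNReal.ofReal α ≤ μ.rnDeriv ν x)
    (f : X → ℝ≥0∞) (hf : Measurable f) :
    ∫⁻ x in Ω, f x ∂ν ≤ (ENNReal.ofReal α)⁻¹ * ∫⁻ x, f x ∂μ := by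
  have h1 : ∫⁻ x, f x ∂μ = ∫⁻ x, (μ.rnDeriv ν x) * f x ∂ν := by
    conv_lhs => rw [← Measure.withDensity_rnDeriv_eq μ ν hμν]
    rw [lintegral_withDensity_eq_lintegral_mul ν (μ.measurable_rnDeriv ν) hf]
    rfl
  have h2 : ENNReal.ofReal α * ∫⁻ x in Ω, f x ∂ν ≤ ∫⁻ x, f x ∂μ := by
    rw [h1, ← lintegral_const_mul' _ _ (by simp)]
    calc ∫⁻ x in Ω, ENNReal.ofReal α * f x ∂ν
        ≤ ∫⁻ x in Ω, (μ.rnDeriv ν x) * f x ∂ν := by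
          refine setLIntegral_mono_ae ((μ.measurable_rnDeriv ν).mul hf).aemeasurable ?_
          filter_upwards [hd] with x hx hxΩ
          exact mul_le_mul_left (hx hxΩ) _
      _ ≤ ∫⁻ x, (μ.rnDeriv ν x) * f x ∂ν := setLIntegral_le_lintegral _ _
  rw [← ENNReal.div_eq_inv_mul]
  exact (ENNReal.le_div_iff_mul_le (Or.inl (by simp [hα])) (Or.inl (by simp))).mpr
    (by rwa [mul_comm])

lemma est_H2 (ν : Measure X) [IsFiniteMeasure ν] (μ : Measure X) [IsFiniteMeasure μ]
    (hμν : μ ≪ ν) {Ω : Set X} (hΩ : MeasurableSet Ω) {p q : ℝ} (hp : 0 < p) (hpq : p < q)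
    (h0 : ∀ᵐ x ∂ν, x ∈ Ω → μ.rnDeriv ν x ≠ 0)
    (f : X → ℝ≥0∞) (hf : Measurable f) :
    ∫⁻ x in Ω, f x ^ p ∂ν ≤
      (∫⁻ x, f x ^ q ∂μ) ^ (p / q) *
        (∫⁻ x in Ω, (μ.rnDeriv ν x) ^ (-(p / (q - p))) ∂ν) ^ ((q - p) / q) := by
  set g := μ.rnDeriv ν with hg
  have hgm : Measurable g := μ.measurable_rnDeriv ν
  have hq : 0 < q := hp.trans hpq
  have hconj : Real.HolderConjugate (q / p) (q / (q - p)) := by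
    rw [Real.holderConjugate_iff]; constructor
    · rw [lt_div_iff₀ hp]; linarith
    · rw [inv_div, inv_div, ← add_div, add_sub_cancel, div_self hq.ne']
  have hae : ∀ᵐ x ∂(ν.restrict Ω), f x ^ p = (f x ^ p * g x ^ (p / q)) * g x ^ (-(p / q)) := by
    rw [ae_restrict_iff' hΩ]
    filter_upwards [h0, Measure.rnDeriv_lt_top μ ν] with x hx hxt hxΩ
    rw [mul_assoc, ← ENNReal.rpow_add _ _ (hx hxΩ) hxt.ne]
    simp
  calc ∫⁻ x in Ω, f x ^ p ∂ν
      = ∫⁻ x in Ω, (f x ^ p * g x ^ (p / q)) * g x ^ (-(p / q)) ∂ν :=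
        lintegral_congr_ae hae
    _ ≤ (∫⁻ x in Ω, (f x ^ p * g x ^ (p / q)) ^ (q / p) ∂ν) ^ (1 / (q / p)) *
        (∫⁻ x in Ω, (g x ^ (-(p / q))) ^ (q / (q - p)) ∂ν) ^ (1 / (q / (q - p))) := by
        exact ENNReal.lintegral_mul_le_Lp_mul_Lq _ hconj
          ((hf.pow_const p).mul (hgm.pow_const _)).aemeasurable
          (hgm.pow_const _).aemeasurable
    _ = (∫⁻ x in Ω, f x ^ q * g x ∂ν) ^ (p / q) *
        (∫⁻ x in Ω, g x ^ (-(p / (q - p))) ∂ν) ^ ((q - p) / q) := by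
        rw [one_div_div, one_div_div]
        congr 1
        · congr 1
          refine lintegral_congr fun x => ?_
          rw [ENNReal.mul_rpow_of_nonneg _ _ (by positivity), ← ENNReal.rpow_mul,
            ← ENNReal.rpow_mul]
          rw [show p * (q / p) = q by field_simp, show p / q * (q / p) = 1 by field_simp,
            ENNReal.rpow_one]
        · congr 1
          refine lintegral_congr fun x => ?_
          rw [← ENNReal.rpow_mul]
          congr 1
          rw [neg_mul, neg_inj, div_mul_div_comm, mul_comm p q,
            mul_div_mul_left _ _ hq.ne']
    _ ≤ (∫⁻ x, f x ^ q * g x ∂ν) ^ (p / q) *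
        (∫⁻ x in Ω, g x ^ (-(p / (q - p))) ∂ν) ^ ((q - p) / q) := by
        gcongr
        · exact Measure.restrict_le_self
    _ = (∫⁻ x, f x ^ q ∂μ) ^ (p / q) *
        (∫⁻ x in Ω, g x ^ (-(p / (q - p))) ∂ν) ^ ((q - p) / q) := by
        congr 2
        conv_rhs => rw [← Measure.withDensity_rnDeriv_eq μ ν hμν]
        rw [lintegral_withDensity_eq_lintegral_mul ν (μ.measurable_rnDeriv ν) (hf.pow_const q)]
        exact lintegral_congr fun x => mul_comm _ _

lemma poincare_main (m : X → Measure X) (hprob : ∀ x, IsProbabilityMeasure (m x))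
    (hker : MeasurableKernel m) (ν : Measure X) [IsProbabilityMeasure ν]
    (herg : ErgodicRW m ν) (habs : ∀ x, m x ≪ ν)
    {p q : ℝ} (hp : 1 ≤ p) (hpq : p ≤ q)
    (H : ∀ B : Set X, MeasurableSet B → ν B = 0 →
      ∃ (N : ℕ) (xs : Fin N → X) (Ω : Fin N → Set X) (K : Fin N → ℝ≥0∞),
        (∀ i, xs i ∉ B) ∧ (∀ i, MeasurableSet (Ω i)) ∧ (⋃ i, Ω i) = Set.univ ∧
        (∀ i, K i < ⊤) ∧
        ∀ v : X → ℝ, Measurable v → ∀ i,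
          ∫⁻ x in Ω i, ENNReal.ofReal (|v x - v (xs i)| ^ p) ∂ν ≤
            K i * (∫⁻ y, ENNReal.ofReal (|v y - v (xs i)| ^ q) ∂(m (xs i))) ^ (p / q)) :
    ∃ c : ℝ, 0 < c ∧ ∀ u : X → ℝ, Measurable u → MemLp u (ENNReal.ofReal q) ν →
        eLpNorm u (ENNReal.ofReal p) ν ≤ ENNReal.ofReal c *
            ((∫⁻ x, ∫⁻ y, ENNReal.ofReal (|u y - u x| ^ q) ∂(m x) ∂ν) ^ (1 / q) +
              ENNReal.ofReal |∫ x, u x ∂ν|) := by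
  have hp0 : 0 < p := lt_of_lt_of_le one_pos hp
  have hq0 : 0 < q := lt_of_lt_of_le hp0 hpq
  have hq1 : 1 ≤ q := hp.trans hpq
  set P := ENNReal.ofReal p with hPdef
  set Q := ENNReal.ofReal q with hQdef
  have hP0 : P ≠ 0 := by simp [hPdef, ENNReal.ofReal_eq_zero, not_le, hp0]
  have hPt : P ≠ ⊤ := by simp [hPdef]
  have hP1 : 1 ≤ P := by rw [hPdef, ← ENNReal.ofReal_one]; exact ENNReal.ofReal_le_ofReal hp
  have hPQ : P ≤ Q := ENNReal.ofReal_le_ofReal hpq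
  set Energy : (X → ℝ) → ℝ≥0∞ :=
    fun u => ∫⁻ x, ∫⁻ y, ENNReal.ofReal (|u y - u x| ^ q) ∂(m x) ∂ν with hEdef
  by_contra hcon
  push_neg at hcon
  have hex : ∀ n : ℕ, ∃ u : X → ℝ, Measurable u ∧ MemLp u Q ν ∧
      ENNReal.ofReal ((n : ℝ) + 1) * ((Energy u) ^ (1/q) + ENNReal.ofReal |∫ x, u x ∂ν|)
        < eLpNorm u P ν := by
    intro n
    obtain ⟨u, hu1, hu2, hu3⟩ := hcon ((n : ℝ) + 1) (by positivity)
    exact ⟨u, hu1, hu2, hu3⟩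
  choose u hu_meas hu_mem hu_lt using hex
  have hS_ne_top : ∀ n, eLpNorm (u n) P ν ≠ ⊤ :=
    fun n => ((hu_mem n).mono_exponent hPQ).2.ne
  have hS_pos : ∀ n, eLpNorm (u n) P ν ≠ 0 := by
    intro n h0
    have h := hu_lt n
    rw [h0] at h
    simp at h
  set t : ℕ → ℝ := fun n => (eLpNorm (u n) P ν).toReal with htdef
  have ht_pos : ∀ n, 0 < t n := fun n => ENNReal.toReal_pos (hS_pos n) (hS_ne_top n)
  have hofReal_t : ∀ n, ENNReal.ofReal (t n) = eLpNorm (u n) P ν :=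
    fun n => ENNReal.ofReal_toReal (hS_ne_top n)
  set v : ℕ → X → ℝ := fun n x => (t n)⁻¹ * u n x with hvdef
  have hv_meas : ∀ n, Measurable (v n) := fun n => (hu_meas n).const_mul _
  have hv_mem : ∀ n, MemLp (v n) Q ν := fun n => (hu_mem n).const_mul _
  have hv_memP : ∀ n, MemLp (v n) P ν := fun n => (hv_mem n).mono_exponent hPQ
  have hv_norm : ∀ n, eLpNorm (v n) P ν = 1 := by
    intro n
    calc eLpNorm (v n) P ν = ‖(t n)⁻¹‖ₑ * eLpNorm (u n) P ν := by
          rw [show v n = (t n)⁻¹ • u n from rfl, eLpNorm_const_smul]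
      _ = ENNReal.ofReal ((t n)⁻¹) * ENNReal.ofReal (t n) := by
          rw [hofReal_t n, Real.enorm_eq_ofReal_abs, abs_of_pos (inv_pos.mpr (ht_pos n))]
      _ = 1 := by
          rw [← ENNReal.ofReal_mul (by positivity), inv_mul_cancel₀ (ht_pos n).ne',
            ENNReal.ofReal_one]
  have hEv : ∀ n, Energy (v n) = ENNReal.ofReal ((t n)⁻¹) ^ q * Energy (u n) := by
    intro n
    have hne : (ENNReal.ofReal ((t n)⁻¹)) ^ q ≠ ⊤ :=
      ENNReal.rpow_ne_top_of_nonneg hq0.le ENNReal.ofReal_ne_top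
    rw [hEdef]
    simp only
    rw [← lintegral_const_mul' _ _ hne]
    refine lintegral_congr fun x => ?_
    rw [← lintegral_const_mul' _ _ hne]
    refine lintegral_congr fun y => ?_
    rw [ENNReal.ofReal_rpow_of_nonneg (inv_pos.mpr (ht_pos n)).le hq0.le,
        ← ENNReal.ofReal_mul (Real.rpow_nonneg (inv_pos.mpr (ht_pos n)).le q)]
    congr 1
    rw [← Real.mul_rpow (inv_pos.mpr (ht_pos n)).le (abs_nonneg _)]
    congr 1
    rw [show v n y - v n x = (t n)⁻¹ * (u n y - u n x) by simp only [hvdef]; ring,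
        abs_mul, abs_of_pos (inv_pos.mpr (ht_pos n))]
  have hIv : ∀ n, ∫ x, v n x ∂ν = (t n)⁻¹ * ∫ x, u n x ∂ν := by
    intro n
    rw [show (fun x => v n x) = fun x => (t n)⁻¹ • u n x from rfl, integral_smul]
    rfl
  have hsmall : ∀ n, (Energy (v n)) ^ (1/q) + ENNReal.ofReal |∫ x, v n x ∂ν|
      < ENNReal.ofReal (1/((n : ℝ)+1)) := by
    intro n
    have hkey : (Energy (u n)) ^ (1/q) + ENNReal.ofReal |∫ x, u n x ∂ν|
        = ENNReal.ofReal (t n) * ((Energy (v n)) ^ (1/q) + ENNReal.ofReal |∫ x, v n x ∂ν|) := by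
      have h1 : (Energy (v n)) ^ (1/q) = ENNReal.ofReal ((t n)⁻¹) * (Energy (u n)) ^ (1/q) := by
        rw [hEv n, ENNReal.mul_rpow_of_nonneg _ _ (by positivity), ← ENNReal.rpow_mul,
          mul_one_div, div_self hq0.ne', ENNReal.rpow_one]
      have h2 : ENNReal.ofReal |∫ x, v n x ∂ν|
          = ENNReal.ofReal ((t n)⁻¹) * ENNReal.ofReal |∫ x, u n x ∂ν| := by
        rw [hIv n, abs_mul, abs_of_pos (inv_pos.mpr (ht_pos n)),
          ENNReal.ofReal_mul (inv_pos.mpr (ht_pos n)).le]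
      rw [h1, h2, ← mul_add, ← mul_assoc, ← ENNReal.ofReal_mul (ht_pos n).le,
        mul_inv_cancel₀ (ht_pos n).ne', ENNReal.ofReal_one, one_mul]
    by_contra hle
    push_neg at hle
    have h := hu_lt n
    rw [hkey, ← hofReal_t n] at h
    have hchain : ENNReal.ofReal (t n) ≤ ENNReal.ofReal ((n:ℝ)+1) *
        (ENNReal.ofReal (t n) * ((Energy (v n)) ^ (1/q) + ENNReal.ofReal |∫ x, v n x ∂ν|)) := by
      calc ENNReal.ofReal (t n)
          = ENNReal.ofReal (((n:ℝ)+1) * (1/((n:ℝ)+1))) * ENNReal.ofReal (t n) := by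
            rw [mul_one_div, div_self (by positivity : ((n:ℝ)+1) ≠ 0), ENNReal.ofReal_one,
              one_mul]
        _ = ENNReal.ofReal ((n:ℝ)+1) * (ENNReal.ofReal (1/((n:ℝ)+1)) * ENNReal.ofReal (t n)) := by
            rw [ENNReal.ofReal_mul (by positivity), mul_assoc]
        _ ≤ ENNReal.ofReal ((n:ℝ)+1) * (((Energy (v n)) ^ (1/q) +
              ENNReal.ofReal |∫ x, v n x ∂ν|) * ENNReal.ofReal (t n)) := by
            gcongr
        _ = ENNReal.ofReal ((n:ℝ)+1) * (ENNReal.ofReal (t n) *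
              ((Energy (v n)) ^ (1/q) + ENNReal.ofReal |∫ x, v n x ∂ν|)) := by ring
    exact absurd h (not_lt.mpr hchain)
  have hEvle : ∀ n, Energy (v n) ≤ ENNReal.ofReal (1/((n:ℝ)+1)) := by
    intro n
    have h1 : (Energy (v n)) ^ (1/q) ≤ ENNReal.ofReal (1/((n:ℝ)+1)) :=
      le_of_lt (lt_of_le_of_lt le_self_add (hsmall n))
    have h2 : Energy (v n) = ((Energy (v n)) ^ (1/q)) ^ q := by
      rw [← ENNReal.rpow_mul, one_div_mul_cancel hq0.ne', ENNReal.rpow_one]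
    calc Energy (v n) = ((Energy (v n)) ^ (1/q)) ^ q := h2
      _ ≤ ENNReal.ofReal (1/((n:ℝ)+1)) ^ q := ENNReal.rpow_le_rpow h1 hq0.le
      _ ≤ ENNReal.ofReal (1/((n:ℝ)+1)) ^ (1:ℝ) := by
          refine ENNReal.rpow_le_rpow_of_exponent_ge ?_ hq1
          refine ENNReal.ofReal_le_one.mpr ?_
          rw [div_le_one (by positivity)]
          simp
      _ = ENNReal.ofReal (1/((n:ℝ)+1)) := ENNReal.rpow_one _
  have hIvle : ∀ n, |∫ x, v n x ∂ν| ≤ 1/((n:ℝ)+1) := by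
    intro n
    have h1 : ENNReal.ofReal |∫ x, v n x ∂ν| < ENNReal.ofReal (1/((n:ℝ)+1)) :=
      lt_of_le_of_lt le_add_self (hsmall n)
    exact le_of_lt ((ENNReal.ofReal_lt_ofReal_iff_of_nonneg (abs_nonneg _)).mp h1)
  have hgeom : ∀ k : ℕ, Energy (v (2^k)) ≤ ENNReal.ofReal ((1/2:ℝ)^k) := by
    intro k
    refine (hEvle (2^k)).trans (ENNReal.ofReal_le_ofReal ?_)
    rw [div_pow, one_pow]
    refine one_div_le_one_div_of_le (by positivity) ?_
    push_cast
    linarith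
  -- the functions F_k and the null set B
  set Fk : ℕ → X → ℝ≥0∞ :=
    fun k x => ∫⁻ y, ENNReal.ofReal (|v (2^k) y - v (2^k) x| ^ q) ∂(m x) with hFkdef
  have hFk_meas : ∀ k, Measurable (Fk k) := by
    intro k
    refine aux_kernel_meas m hprob hker ?_
    exact ((Real.continuous_rpow_const hq0.le).measurable.comp
      (((hv_meas _).comp measurable_snd).sub ((hv_meas _).comp measurable_fst)).abs).ennreal_ofReal
  have htsum_meas : Measurable fun x => ∑' k, Fk k x := Measurable.ennreal_tsum hFk_meas
  have hsum_fin : ∫⁻ x, ∑' k, Fk k x ∂ν ≠ ⊤ := by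
    rw [lintegral_tsum (fun k => (hFk_meas k).aemeasurable)]
    have hle : ∑' k, ∫⁻ x, Fk k x ∂ν ≤ ∑' k : ℕ, ENNReal.ofReal ((1/2:ℝ)) ^ k := by
      refine ENNReal.tsum_le_tsum fun k => ?_
      rw [← ENNReal.ofReal_pow (by norm_num)]
      exact hgeom k
    refine ne_top_of_le_ne_top ?_ hle
    rw [ENNReal.tsum_geometric]
    refine ENNReal.inv_ne_top.mpr ?_
    rw [ne_eq, tsub_eq_zero_iff_le, not_le]
    exact ENNReal.ofReal_lt_one.mpr (by norm_num)
  set B : Set X := {x | ∑' k, Fk k x = ⊤} with hBdef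
  have hBmeas : MeasurableSet B := htsum_meas (measurableSet_singleton ⊤)
  have hBnull : ν B = 0 := by
    have h := ae_lt_top htsum_meas hsum_fin
    rw [ae_iff] at h
    refine measure_mono_null ?_ h
    intro x hx
    simp only [hBdef, mem_setOf_eq] at hx ⊢
    simp [hx]
  obtain ⟨N, xs, Ω, K, hxs, hΩm, hΩu, hKlt, hest⟩ := H B hBmeas hBnull
  have hFk_tend : ∀ i, Tendsto (fun k => Fk k (xs i)) atTop (𝓝 0) := by
    intro i
    refine ENNReal.tendsto_atTop_zero_of_tsum_ne_top ?_
    exact hxs i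
  set G2 : Fin N → ℕ → ℝ≥0∞ :=
    fun i k => ∫⁻ x in Ω i, ENNReal.ofReal (|v (2^k) x - v (2^k) (xs i)| ^ p) ∂ν with hG2def
  have hG2_le : ∀ i k, G2 i k ≤ K i * (Fk k (xs i)) ^ (p/q) :=
    fun i k => hest (v (2^k)) (hv_meas _) i
  have hG2_tend : ∀ i, Tendsto (G2 i) atTop (𝓝 0) := by
    intro i
    have hup : Tendsto (fun k => K i * (Fk k (xs i)) ^ (p/q)) atTop (𝓝 0) := by
      have h1 : Tendsto (fun k => (Fk k (xs i)) ^ (p/q)) atTop (𝓝 0) := by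
        have := (hFk_tend i).ennrpow_const (p/q)
        rwa [ENNReal.zero_rpow_of_pos (by positivity)] at this
      have := ENNReal.Tendsto.const_mul h1 (Or.inr (hKlt i).ne)
      rwa [mul_zero] at this
    exact tendsto_of_tendsto_of_tendsto_of_le_of_le tendsto_const_nhds hup
      (fun k => zero_le) (fun k => hG2_le i k)
  -- values at the base points
  set a : Fin N → ℕ → ℝ := fun i k => v (2^k) (xs i) with hadef
  set b : ℕ → Fin N → ℝ := fun k i => if ν (Ω i) = 0 then 0 else a i k with hbdef
  -- per-coordinate bound
  have hbound : ∀ i : Fin N, ∃ M : ℝ, 0 ≤ M ∧ ∀ k, |b k i| ≤ M := by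
    intro i
    by_cases hν : ν (Ω i) = 0
    · exact ⟨0, le_refl _, fun k => by simp [hbdef, hν]⟩
    · set c0 : ℝ≥0∞ := (ν (Ω i)) ^ (1/p) with hc0def
      have hc0_ne : c0 ≠ 0 := by
        simp only [hc0def, ne_eq, ENNReal.rpow_eq_zero_iff, not_or]
        constructor
        · rintro ⟨h1, -⟩; exact hν h1
        · rintro ⟨h1, -⟩; exact (measure_ne_top ν _) h1
      have hc0_lt : c0 ≠ ⊤ := by
        refine ENNReal.rpow_ne_top_of_nonneg (by positivity) (measure_ne_top ν _)
      have hkey : ∀ k, ENNReal.ofReal (|a i k|) * c0 ≤ (G2 i k) ^ (1/p) + 1 := by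
        intro k
        have htri : eLpNorm (fun _ : X => a i k) P (ν.restrict (Ω i)) ≤
            eLpNorm (fun x => v (2^k) x - (v (2^k) x - a i k)) P (ν.restrict (Ω i)) := by
          refine le_of_eq ?_
          congr 1
          funext x; ring
        have htri2 : eLpNorm (fun x => v (2^k) x - (v (2^k) x - a i k)) P (ν.restrict (Ω i)) ≤
            eLpNorm (v (2^k)) P (ν.restrict (Ω i)) +
              eLpNorm (fun x => v (2^k) x - a i k) P (ν.restrict (Ω i)) :=
          eLpNorm_sub_le ((hv_meas _).aestronglyMeasurable)
            (((hv_meas _).sub measurable_const).aestronglyMeasurable) hP1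
        have hconst : eLpNorm (fun _ : X => a i k) P (ν.restrict (Ω i)) =
            ENNReal.ofReal (|a i k|) * c0 := by
          rw [eLpNorm_const' _ hP0 hPt, Measure.restrict_apply_univ, hc0def,
            Real.enorm_eq_ofReal_abs, hPdef, ENNReal.toReal_ofReal hp0.le]
        have hrest : eLpNorm (v (2^k)) P (ν.restrict (Ω i)) ≤ 1 := by
          rw [← hv_norm (2^k)]
          exact eLpNorm_mono_measure _ Measure.restrict_le_self
        have help : eLpNorm (fun x => v (2^k) x - a i k) P (ν.restrict (Ω i)) =
            (G2 i k) ^ (1/p) := by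
          rw [hPdef, elp_eq _ hp0]
        calc ENNReal.ofReal (|a i k|) * c0 = _ := hconst.symm
          _ ≤ _ := htri.trans htri2
          _ ≤ 1 + (G2 i k) ^ (1/p) := by rw [help]; gcongr
          _ = (G2 i k) ^ (1/p) + 1 := by rw [add_comm]
        
      have hG2p : Tendsto (fun k => (G2 i k) ^ (1/p)) atTop (𝓝 0) := by
        have := (hG2_tend i).ennrpow_const (1/p)
        rwa [ENNReal.zero_rpow_of_pos (by positivity)] at this
      obtain ⟨k0, hk0⟩ := eventually_atTop.mp
        (hG2p.eventually_lt_const (by norm_num : (0:ℝ≥0∞) < 1) |>.mono fun k hk => hk.le)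
      set M1e : ℝ≥0∞ := 2 / c0 with hM1def
      have hM1_ne : M1e ≠ ⊤ := by
        simp only [hM1def, ne_eq, ENNReal.div_eq_top, not_or]
        exact ⟨fun h => absurd h.2 hc0_ne, fun h => absurd h.1 (by norm_num)⟩
      have htail : ∀ k, k0 ≤ k → |a i k| ≤ M1e.toReal := by
        intro k hk
        have h1 : ENNReal.ofReal (|a i k|) * c0 ≤ 2 := by
          refine (hkey k).trans ?_
          have := hk0 k hk
          calc (G2 i k) ^ (1/p) + 1 ≤ 1 + 1 := by gcongr
            _ = 2 := by norm_num
        have h2 : ENNReal.ofReal (|a i k|) ≤ M1e := by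
          rw [hM1def]
          exact ENNReal.le_div_iff_mul_le (Or.inl hc0_ne) (Or.inl hc0_lt) |>.mpr h1
        calc |a i k| = (ENNReal.ofReal (|a i k|)).toReal := by
              rw [ENNReal.toReal_ofReal (abs_nonneg _)]
          _ ≤ M1e.toReal := ENNReal.toReal_mono hM1_ne h2
      set M2 : ℝ := ∑ j ∈ Finset.range k0, |a i j| with hM2def
      refine ⟨max M1e.toReal M2, le_max_of_le_left ENNReal.toReal_nonneg, fun k => ?_⟩
      have hba : b k i = a i k := if_neg hν
      rw [hba]
      rcases le_or_gt k0 k with hk | hk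
      · exact le_max_of_le_left (htail k hk)
      · refine le_max_of_le_right ?_
        rw [hM2def]
        exact Finset.single_le_sum (fun j _ => abs_nonneg (a i j))
          (Finset.mem_range.mpr hk)
  choose M hM0 hMb using hbound
  set C : ℝ := ∑ i, M i with hCdef
  have hC0 : 0 ≤ C := Finset.sum_nonneg fun i _ => hM0 i
  have hbC : ∀ k, b k ∈ Metric.closedBall (0 : Fin N → ℝ) C := by
    intro k
    rw [Metric.mem_closedBall, dist_zero_right]
    refine (pi_norm_le_iff_of_nonneg hC0).mpr fun i => ?_
    rw [Real.norm_eq_abs]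
    exact (hMb i k).trans (Finset.single_le_sum (fun j _ => hM0 j) (Finset.mem_univ i))
  obtain ⟨L, hL, φ, hφ, hφtend⟩ :=
    (isCompact_closedBall (0 : Fin N → ℝ) C).tendsto_subseq hbC
  have hLtend : ∀ i : Fin N, ν (Ω i) ≠ 0 →
      Tendsto (fun k => a i (φ k)) atTop (𝓝 (L i)) := by
    intro i hν
    have h1 : Tendsto (fun k => b (φ k) i) atTop (𝓝 (L i)) :=
      (continuous_apply i).continuousAt.tendsto.comp hφtend
    refine h1.congr fun k => ?_
    simp only [hbdef, if_neg hν]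
  -- partition of X subordinate to Ω
  set Pt : Fin N → Set X := fun i => Ω i \ ⋃ j, ⋃ (_ : j < i), Ω j with hPtdef
  have hPtm : ∀ i, MeasurableSet (Pt i) :=
    fun i => (hΩm i).diff (MeasurableSet.iUnion fun j => MeasurableSet.iUnion fun _ => hΩm j)
  have hPtsub : ∀ i, Pt i ⊆ Ω i := fun i => diff_subset
  have hPt_disj : Pairwise (Function.onFun Disjoint Pt) := by
    intro i j hij
    rcases lt_or_gt_of_ne hij with h | h
    · refine Set.disjoint_left.mpr fun x hxi hxj => ?_
      exact hxj.2 (mem_iUnion.mpr ⟨i, mem_iUnion.mpr ⟨h, hxi.1⟩⟩)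
    · refine Set.disjoint_left.mpr fun x hxi hxj => ?_
      exact hxi.2 (mem_iUnion.mpr ⟨j, mem_iUnion.mpr ⟨h, hxj.1⟩⟩)
  have hPt_cover : ⋃ i, Pt i = Set.univ := by
    rw [Set.eq_univ_iff_forall]
    intro x
    have hx : {i : Fin N | x ∈ Ω i}.Nonempty := by
      have := Set.eq_univ_iff_forall.mp hΩu x
      exact mem_iUnion.mp this
    obtain ⟨i, hi, hmin⟩ := (wellFounded_lt (α := Fin N)).has_min {i | x ∈ Ω i} hx
    refine mem_iUnion.mpr ⟨i, hi, ?_⟩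
    intro hc
    obtain ⟨j, hjmem⟩ := mem_iUnion.mp hc
    obtain ⟨hj, hxj⟩ := mem_iUnion.mp hjmem
    exact hmin j hxj hj
  -- the candidate limit function
  set w : X → ℝ := fun x => ∑ i, (Pt i).indicator (fun _ => L i) x with hwdef
  have hw_meas : Measurable w :=
    Finset.measurable_sum _ fun i _ => measurable_const.indicator (hPtm i)
  have hw_eq : ∀ i, ∀ x ∈ Pt i, w x = L i := by
    intro i x hx
    rw [hwdef]
    simp only
    rw [Finset.sum_eq_single i]
    · rw [indicator_of_mem hx]
    · intro j _ hji
      exact indicator_of_notMem (Set.disjoint_right.mp (hPt_disj hji) hx) _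
    · intro hmem; exact absurd (Finset.mem_univ i) hmem
  have hw_range : ∀ x, ∃ i, w x = L i := by
    intro x
    have hx : x ∈ ⋃ i, Pt i := by rw [hPt_cover]; exact mem_univ x
    obtain ⟨i, hi⟩ := mem_iUnion.mp hx
    exact ⟨i, hw_eq i x hi⟩
  -- L^p convergence towards w
  set g : ℕ → X → ℝ := fun k => v (2^(φ k)) with hgdef
  have hgφ : StrictMono fun k => 2^(φ k) := by
    have h2 : StrictMono (fun n : ℕ => 2 ^ n) := fun c d h => Nat.pow_lt_pow_right one_lt_two h
    exact h2.comp hφ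
  have hTi : ∀ i : Fin N, Tendsto
      (fun k => ∫⁻ x in Pt i, ENNReal.ofReal (|g k x - L i| ^ p) ∂ν) atTop (𝓝 0) := by
    intro i
    by_cases hν : ν (Ω i) = 0
    · have hPt0 : ν (Pt i) = 0 := measure_mono_null (hPtsub i) hν
      have hz : ∀ k, ∫⁻ x in Pt i, ENNReal.ofReal (|g k x - L i| ^ p) ∂ν = 0 := by
        intro k
        rw [Measure.restrict_eq_zero.mpr hPt0, lintegral_zero_measure]
      simp only [hz]
      exact tendsto_const_nhds
    · set e2 : ℕ → ℝ≥0∞ := fun k => (G2 i (φ k)) ^ (1/p) with he2def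
      set e3 : ℕ → ℝ≥0∞ := fun k =>
        ENNReal.ofReal (|a i (φ k) - L i|) * (ν (Ω i)) ^ (1/p) with he3def
      have he2 : Tendsto e2 atTop (𝓝 0) := by
        have := (((hG2_tend i).comp hφ.tendsto_atTop).ennrpow_const (1/p))
        rwa [ENNReal.zero_rpow_of_pos (by positivity)] at this
      have he3 : Tendsto e3 atTop (𝓝 0) := by
        have h1 : Tendsto (fun k => |a i (φ k) - L i|) atTop (𝓝 0) := by
          have := ((hLtend i hν).sub_const (L i)).abs
          rwa [sub_self, abs_zero] at this
        have h2 : Tendsto (fun k => ENNReal.ofReal (|a i (φ k) - L i|)) atTop (𝓝 0) := by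
          have := (ENNReal.continuous_ofReal.tendsto 0).comp h1
          rwa [ENNReal.ofReal_zero] at this
        have h3 := ENNReal.Tendsto.mul_const (b := (ν (Ω i)) ^ (1/p)) h2
          (Or.inr (ENNReal.rpow_ne_top_of_nonneg (by positivity) (measure_ne_top ν _)))
        rwa [zero_mul] at h3
      have hb : ∀ k, ∫⁻ x in Pt i, ENNReal.ofReal (|g k x - L i| ^ p) ∂ν
          ≤ (e2 k + e3 k) ^ p := by
        intro k
        have h2 : ∫⁻ x in Ω i, ENNReal.ofReal (|g k x - L i| ^ p) ∂ν
            = (eLpNorm (fun x => g k x - L i) P (ν.restrict (Ω i))) ^ p := by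
          rw [hPdef, elp_eq _ hp0, ← ENNReal.rpow_mul, one_div_mul_cancel hp0.ne',
            ENNReal.rpow_one]
        have h3 : eLpNorm (fun x => g k x - L i) P (ν.restrict (Ω i)) ≤ e2 k + e3 k := by
          have heq : (fun x => g k x - L i)
              = fun x => (g k x - a i (φ k)) + (a i (φ k) - L i) := by funext x; ring
          rw [heq]
          refine (eLpNorm_add_le ((hv_meas _).sub measurable_const).aestronglyMeasurable
            aestronglyMeasurable_const hP1).trans ?_
          refine add_le_add (le_of_eq ?_) (le_of_eq ?_)
          · rw [hPdef, elp_eq _ hp0, he2def]; rfl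
          · rw [eLpNorm_const' _ hP0 hPt, Measure.restrict_apply_univ, he3def,
              Real.enorm_eq_ofReal_abs, hPdef, ENNReal.toReal_ofReal hp0.le]
        calc ∫⁻ x in Pt i, ENNReal.ofReal (|g k x - L i| ^ p) ∂ν
            ≤ ∫⁻ x in Ω i, ENNReal.ofReal (|g k x - L i| ^ p) ∂ν :=
              lintegral_mono_set (hPtsub i)
          _ = (eLpNorm (fun x => g k x - L i) P (ν.restrict (Ω i))) ^ p := h2
          _ ≤ (e2 k + e3 k) ^ p := ENNReal.rpow_le_rpow h3 hp0.le
      have hup : Tendsto (fun k => (e2 k + e3 k) ^ p) atTop (𝓝 0) := by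
        have := (he2.add he3).ennrpow_const p
        rwa [add_zero, ENNReal.zero_rpow_of_pos hp0] at this
      exact tendsto_of_tendsto_of_tendsto_of_le_of_le tendsto_const_nhds hup
        (fun k => zero_le) hb
  have hTk : Tendsto (fun k => ∫⁻ x, ENNReal.ofReal (|g k x - w x| ^ p) ∂ν) atTop (𝓝 0) := by
    have hsplit : ∀ k, ∫⁻ x, ENNReal.ofReal (|g k x - w x| ^ p) ∂ν
        = ∑ i, ∫⁻ x in Pt i, ENNReal.ofReal (|g k x - L i| ^ p) ∂ν := by
      intro k
      rw [← setLIntegral_univ, ← hPt_cover, lintegral_iUnion hPtm hPt_disj, tsum_fintype]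
      refine Finset.sum_congr rfl fun i _ => ?_
      refine setLIntegral_congr_fun (hPtm i) (fun x hx => ?_)
      rw [hw_eq i x hx]
    rw [funext hsplit]
    have hfin := tendsto_finset_sum (Finset.univ : Finset (Fin N)) (fun i _ => hTi i)
    simpa using hfin
  have hW : Tendsto (fun k => eLpNorm (fun x => g k x - w x) P ν) atTop (𝓝 0) := by
    have heq : ∀ k, eLpNorm (fun x => g k x - w x) P ν
        = (∫⁻ x, ENNReal.ofReal (|g k x - w x| ^ p) ∂ν) ^ (1/p) := fun k => by
      rw [hPdef, elp_eq _ hp0]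
    rw [funext heq]
    have := hTk.ennrpow_const (1/p)
    rwa [ENNReal.zero_rpow_of_pos (by positivity)] at this
  -- the integral of w vanishes
  have hw_bd : ∀ x, |w x| ≤ ∑ i, |L i| := by
    intro x
    rw [hwdef]
    refine (Finset.abs_sum_le_sum_abs _ _).trans ?_
    refine Finset.sum_le_sum fun i _ => ?_
    by_cases hx : x ∈ Pt i
    · rw [indicator_of_mem hx]
    · rw [indicator_of_notMem hx]; simp
  have hw_int : Integrable w ν := by
    refine Integrable.mono' (integrable_const (∑ i, |L i|)) hw_meas.aestronglyMeasurable
      (ae_of_all _ fun x => ?_)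
    rw [Real.norm_eq_abs]; exact hw_bd x
  have hw_memP : MemLp w P ν := by
    refine MemLp.of_bound hw_meas.aestronglyMeasurable (∑ i, |L i|) (ae_of_all _ fun x => ?_)
    rw [Real.norm_eq_abs]; exact hw_bd x
  have hQ1 : 1 ≤ Q := hP1.trans hPQ
  have hg_int : ∀ k, Integrable (g k) ν := fun k => (hv_mem _).integrable hQ1
  have hWne : ∀ k, eLpNorm (fun x => g k x - w x) P ν ≠ ⊤ :=
    fun k => ((hv_memP _).sub hw_memP).2.ne
  have hint_tend : Tendsto (fun k => ∫ x, g k x ∂ν) atTop (𝓝 (∫ x, w x ∂ν)) := by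
    rw [tendsto_iff_dist_tendsto_zero]
    have hb : ∀ k, dist (∫ x, g k x ∂ν) (∫ x, w x ∂ν)
        ≤ (eLpNorm (fun x => g k x - w x) P ν).toReal := by
      intro k
      rw [Real.dist_eq, ← integral_sub (hg_int k) hw_int]
      have h1 : |∫ x, (g k x - w x) ∂ν| ≤ ∫ x, |g k x - w x| ∂ν := by
        simpa [Real.norm_eq_abs] using norm_integral_le_integral_norm (fun x => g k x - w x)
      have h2 : ∫ x, |g k x - w x| ∂ν = (∫⁻ x, ENNReal.ofReal (|g k x - w x|) ∂ν).toReal :=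
        integral_eq_lintegral_of_nonneg_ae (ae_of_all _ fun x => abs_nonneg _)
          ((hv_meas _).sub hw_meas).abs.aestronglyMeasurable
      have h3 : ∫⁻ x, ENNReal.ofReal (|g k x - w x|) ∂ν
          = eLpNorm (fun x => g k x - w x) 1 ν := by
        rw [eLpNorm_one_eq_lintegral_enorm]
        exact lintegral_congr fun x => (Real.enorm_eq_ofReal_abs _).symm
      have h4 : eLpNorm (fun x => g k x - w x) 1 ν ≤ eLpNorm (fun x => g k x - w x) P ν :=
        eLpNorm_le_eLpNorm_of_exponent_le hP1 ((hv_meas _).sub hw_meas).aestronglyMeasurable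
      calc |∫ x, (g k x - w x) ∂ν| ≤ ∫ x, |g k x - w x| ∂ν := h1
        _ = (∫⁻ x, ENNReal.ofReal (|g k x - w x|) ∂ν).toReal := h2
        _ ≤ (eLpNorm (fun x => g k x - w x) P ν).toReal :=
            ENNReal.toReal_mono (hWne k) (h3 ▸ h4)
    refine squeeze_zero (fun k => dist_nonneg) hb ?_
    have := (ENNReal.tendsto_toReal (by simp : (0:ℝ≥0∞) ≠ ⊤)).comp hW
    simpa [Function.comp_def] using this
  have hint_zero : Tendsto (fun k => ∫ x, g k x ∂ν) atTop (𝓝 0) := by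
    refine squeeze_zero_norm (a := fun k => 1/(((2^(φ k) : ℕ):ℝ)+1)) (fun k => ?_) ?_
    · rw [Real.norm_eq_abs]
      exact hIvle (2^(φ k))
    · have h1 : Tendsto (fun n : ℕ => 1/((n:ℝ)+1)) atTop (𝓝 0) :=
        tendsto_one_div_add_atTop_nhds_zero_nat
      exact h1.comp hgφ.tendsto_atTop
  have h_intw : ∫ x, w x ∂ν = 0 := tendsto_nhds_unique hint_tend hint_zero
  -- a.e. convergent subsequence
  have hW' : Tendsto (fun k => eLpNorm (g k - w) P ν) atTop (𝓝 0) := hW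
  have htim : TendstoInMeasure ν g atTop w :=
    tendstoInMeasure_of_tendsto_eLpNorm hP0 (fun k => (hv_meas _).aestronglyMeasurable)
      hw_meas.aestronglyMeasurable hW'
  obtain ⟨ψ, hψ, haefin⟩ := htim.exists_seq_tendsto_ae
  -- the energy of w vanishes
  have hgψE : Tendsto (fun k => Energy (g (ψ k))) atTop (𝓝 0) := by
    have hb : ∀ k, Energy (g (ψ k)) ≤ ENNReal.ofReal ((1/2:ℝ) ^ (φ (ψ k))) :=
      fun k => hgeom (φ (ψ k))
    refine tendsto_of_tendsto_of_tendsto_of_le_of_le tendsto_const_nhds ?_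
      (fun k => zero_le) hb
    have h1 : Tendsto (fun n : ℕ => (1/2:ℝ) ^ n) atTop (𝓝 0) :=
      tendsto_pow_atTop_nhds_zero_of_lt_one (by norm_num) (by norm_num)
    have h2 := (ENNReal.continuous_ofReal.tendsto 0).comp (h1.comp ((hφ.comp hψ).tendsto_atTop))
    rw [ENNReal.ofReal_zero] at h2; exact h2
  have hEw0 : Energy w = 0 := by
    refine le_antisymm ?_ zero_le
    have hFψ_meas : ∀ k, Measurable fun x =>
        ∫⁻ y, ENNReal.ofReal (|g (ψ k) y - g (ψ k) x| ^ q) ∂(m x) := by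
      intro k
      refine aux_kernel_meas m hprob hker ?_
      exact ((Real.continuous_rpow_const hq0.le).measurable.comp
        (((hv_meas _).comp measurable_snd).sub ((hv_meas _).comp measurable_fst)).abs).ennreal_ofReal
    have hptwise : ∀ᵐ x ∂ν, (∫⁻ y, ENNReal.ofReal (|w y - w x| ^ q) ∂(m x))
        ≤ liminf (fun k => ∫⁻ y, ENNReal.ofReal (|g (ψ k) y - g (ψ k) x| ^ q) ∂(m x)) atTop := by
      filter_upwards [haefin] with x hx
      have hxm : ∀ᵐ y ∂(m x), Tendsto (fun k => g (ψ k) y) atTop (𝓝 (w y)) :=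
        haefin.filter_mono (Measure.ae_le_iff_absolutelyContinuous.mpr (habs x))
      calc (∫⁻ y, ENNReal.ofReal (|w y - w x| ^ q) ∂(m x))
          ≤ ∫⁻ y, liminf (fun k => ENNReal.ofReal (|g (ψ k) y - g (ψ k) x| ^ q)) atTop
              ∂(m x) := by
            refine lintegral_mono_ae ?_
            filter_upwards [hxm] with y hy
            have hsub : Tendsto (fun k => g (ψ k) y - g (ψ k) x) atTop
                (𝓝 (w y - w x)) := hy.sub hx
            have habsq : Tendsto (fun k => |g (ψ k) y - g (ψ k) x| ^ q) atTop
                (𝓝 (|w y - w x| ^ q)) :=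
              (((Real.continuous_rpow_const hq0.le).comp
                continuous_abs).continuousAt.tendsto).comp hsub
            have hlim : Tendsto (fun k => ENNReal.ofReal (|g (ψ k) y - g (ψ k) x| ^ q)) atTop
                (𝓝 (ENNReal.ofReal (|w y - w x| ^ q))) :=
              (ENNReal.continuous_ofReal.continuousAt.tendsto).comp habsq
            rw [hlim.liminf_eq]
          _ ≤ liminf (fun k => ∫⁻ y, ENNReal.ofReal (|g (ψ k) y - g (ψ k) x| ^ q) ∂(m x))
              atTop := by
            refine lintegral_liminf_le fun k => ?_
            exact ((Real.continuous_rpow_const hq0.le).measurable.comp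
              ((hv_meas _).sub measurable_const).abs).ennreal_ofReal
    calc Energy w
        ≤ ∫⁻ x, liminf
            (fun k => ∫⁻ y, ENNReal.ofReal (|g (ψ k) y - g (ψ k) x| ^ q) ∂(m x)) atTop ∂ν :=
          lintegral_mono_ae hptwise
      _ ≤ liminf (fun k => Energy (g (ψ k))) atTop := lintegral_liminf_le hFψ_meas
      _ = 0 := hgψE.liminf_eq
  -- w is a.e. constant, hence a.e. zero
  have hrange_fin : (Set.range w).Finite :=
    (Set.finite_range L).subset
      (by rintro _ ⟨x, rfl⟩; obtain ⟨i, hi⟩ := hw_range x; exact ⟨i, hi.symm⟩)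
  obtain ⟨aℓ, haℓ⟩ := const_of_zero_energy m hprob hker ν herg habs hq0 w hw_meas
    hrange_fin hEw0
  have haℓ0 : aℓ = 0 := by
    have h1 : ∫ x, w x ∂ν = aℓ := by
      rw [integral_congr_ae (haℓ.mono fun x hx => hx : w =ᵐ[ν] fun _ => aℓ)]
      simp
    rw [h_intw] at h1
    exact h1.symm
  have hwz : eLpNorm w P ν = 0 := by
    have hww : w =ᵐ[ν] (fun _ => (0:ℝ)) := by
      filter_upwards [haℓ] with x hx; rw [hx, haℓ0]
    rw [eLpNorm_congr_ae hww, eLpNorm_zero']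
  -- contradiction with the normalization
  have hge : ∀ k, (1:ℝ≥0∞) ≤ eLpNorm (fun x => g k x - w x) P ν := by
    intro k
    have h0 : eLpNorm (g k) P ν = eLpNorm (fun x => (g k x - w x) + w x) P ν := by
      refine eLpNorm_congr_ae (ae_of_all _ fun x => ?_); ring
    calc (1:ℝ≥0∞) = eLpNorm (g k) P ν := (hv_norm _).symm
      _ = eLpNorm (fun x => (g k x - w x) + w x) P ν := h0
      _ ≤ eLpNorm (fun x => g k x - w x) P ν + eLpNorm w P ν :=
          eLpNorm_add_le (((hv_meas _).sub hw_meas).aestronglyMeasurable)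
            hw_meas.aestronglyMeasurable hP1
      _ = eLpNorm (fun x => g k x - w x) P ν := by rw [hwz, add_zero]
  have hfin : (1:ℝ≥0∞) ≤ 0 := ge_of_tendsto hW (Eventually.of_forall hge)
  simp at hfin

end PoincareAux

/-- Poincaré-type inequalities. Under hypothesis (H1), a `(p,p)`-Poincaré inequality holds
for every `p ≥ 1`; under hypothesis (H2) (for `1 ≤ p < q`), a `(q,p)`-Poincaré inequality
holds. -/
theorem poincare_inequalities
    {X : Type*} [MetricSpace X] [PolishSpace X] [MeasurableSpace X] [BorelSpace X]
    (m : X → Measure X) (hprob : ∀ x, IsProbabilityMeasure (m x))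
    (hker : MeasurableKernel m)
    (ν : Measure X) [IsProbabilityMeasure ν] (hrev : Reversible m ν)
    (herg : ErgodicRW m ν) (habs : ∀ x, m x ≪ ν) :
    ((∀ B : Set X, MeasurableSet B → ν B = 0 →
        ∃ (N : ℕ) (xs : Fin N → X) (Ω : Fin N → Set X) (α : ℝ), 0 < α ∧
          (∀ i, xs i ∉ B) ∧ (∀ i, MeasurableSet (Ω i)) ∧ (⋃ i, Ω i) = Set.univ ∧
          ∀ i, ∀ᵐ x ∂ν, x ∈ Ω i → ENNReal.ofReal α ≤ (m (xs i)).rnDeriv ν x) →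
      ∀ p : ℝ, 1 ≤ p → ∃ c : ℝ, 0 < c ∧
        ∀ u : X → ℝ, Measurable u → MemLp u (ENNReal.ofReal p) ν →
          eLpNorm u (ENNReal.ofReal p) ν ≤
            ENNReal.ofReal c *
              ((∫⁻ x, ∫⁻ y, ENNReal.ofReal (|u y - u x| ^ p) ∂(m x) ∂ν) ^ (1 / p) +
                ENNReal.ofReal |∫ x, u x ∂ν|)) ∧
    (∀ p q : ℝ, 1 ≤ p → p < q →
      (∀ B : Set X, MeasurableSet B → ν B = 0 →
        ∃ (N : ℕ) (xs : Fin N → X) (Ω : Fin N → Set X),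
          (∀ i, xs i ∉ B) ∧ (∀ i, MeasurableSet (Ω i)) ∧ (⋃ i, Ω i) = Set.univ ∧
          ∀ i, ∫⁻ x in Ω i, ((m (xs i)).rnDeriv ν x) ^ (-(p / (q - p))) ∂ν < ⊤) →
      ∃ c : ℝ, 0 < c ∧
        ∀ u : X → ℝ, Measurable u → MemLp u (ENNReal.ofReal q) ν →
          eLpNorm u (ENNReal.ofReal p) ν ≤
            ENNReal.ofReal c *
              ((∫⁻ x, ∫⁻ y, ENNReal.ofReal (|u y - u x| ^ q) ∂(m x) ∂ν) ^ (1 / q) +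
                ENNReal.ofReal |∫ x, u x ∂ν|)) := by
  constructor
  · -- part (i)
    intro H1 p hp
    have hp0 : 0 < p := lt_of_lt_of_le one_pos hp
    refine poincare_main m hprob hker ν herg habs hp le_rfl ?_
    intro B hB hB0
    obtain ⟨N, xs, Ω, α, hα, hxs, hΩm, hΩu, hd⟩ := H1 B hB hB0
    refine ⟨N, xs, Ω, fun _ => (ENNReal.ofReal α)⁻¹, hxs, hΩm, hΩu,
      fun i => ENNReal.inv_lt_top.mpr (ENNReal.ofReal_pos.mpr hα), ?_⟩
    intro v hv i
    have : IsProbabilityMeasure (m (xs i)) := hprob (xs i)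
    have hest := est_H1 ν (m (xs i)) (habs (xs i)) (hΩm i) hα (hd i)
      (fun x => ENNReal.ofReal (|v x - v (xs i)| ^ p))
      ((Real.continuous_rpow_const hp0.le).measurable.comp
        ((hv.sub measurable_const).abs)).ennreal_ofReal
    rw [div_self hp0.ne', ENNReal.rpow_one]
    exact hest
  · -- part (ii)
    intro p q hp hpq H2
    have hp0 : 0 < p := lt_of_lt_of_le one_pos hp
    have hq0 : 0 < q := hp0.trans hpq
    refine poincare_main m hprob hker ν herg habs hp hpq.le ?_
    intro B hB hB0
    obtain ⟨N, xs, Ω, hxs, hΩm, hΩu, hint⟩ := H2 B hB hB0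
    have hrd_meas : ∀ i, Measurable fun x => ((m (xs i)).rnDeriv ν x) ^ (-(p / (q - p))) :=
      fun i => ((m (xs i)).measurable_rnDeriv ν).pow_const _
    have h0 : ∀ i, ∀ᵐ x ∂ν, x ∈ Ω i → (m (xs i)).rnDeriv ν x ≠ 0 := by
      intro i
      have hae := ae_lt_top (hrd_meas i) (hint i).ne
      rw [ae_restrict_iff' (hΩm i)] at hae
      filter_upwards [hae] with x hx hxΩ hc
      have h1 := hx hxΩ
      rw [hc, ENNReal.zero_rpow_of_neg (by
        have : 0 < p / (q - p) := div_pos hp0 (by linarith)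
        linarith)] at h1
      exact absurd h1 (lt_irrefl _)
    refine ⟨N, xs, Ω, fun i =>
      (∫⁻ x in Ω i, ((m (xs i)).rnDeriv ν x) ^ (-(p / (q - p))) ∂ν) ^ ((q-p)/q),
      hxs, hΩm, hΩu, ?_, ?_⟩
    · intro i
      exact ENNReal.rpow_lt_top_of_nonneg (div_nonneg (by linarith) hq0.le) (hint i).ne
    · intro v hv i
      have : IsProbabilityMeasure (m (xs i)) := hprob (xs i)
      have hf : Measurable fun x => ENNReal.ofReal (|v x - v (xs i)|) :=
        ((hv.sub measurable_const).abs).ennreal_ofReal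
      have hest := est_H2 ν (m (xs i)) (habs (xs i)) (hΩm i) hp0 hpq (h0 i) _ hf
      calc ∫⁻ x in Ω i, ENNReal.ofReal (|v x - v (xs i)| ^ p) ∂ν
          = ∫⁻ x in Ω i, (ENNReal.ofReal (|v x - v (xs i)|)) ^ p ∂ν :=
            lintegral_congr fun x =>
              (ENNReal.ofReal_rpow_of_nonneg (abs_nonneg _) hp0.le).symm
        _ ≤ (∫⁻ y, (ENNReal.ofReal (|v y - v (xs i)|)) ^ q ∂(m (xs i))) ^ (p / q) *
            (∫⁻ x in Ω i, ((m (xs i)).rnDeriv ν x) ^ (-(p / (q - p))) ∂ν) ^ ((q - p) / q) :=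
              hest
        _ = _ := by
            rw [mul_comm]
            congr 2
            exact lintegral_congr fun y =>
              ENNReal.ofReal_rpow_of_nonneg (abs_nonneg _) hq0.le
end

section
/- Let [X,d,m] be an m-connected metric random walk space with an invariant and reversible σ-finite measure ν, and let Ω ⊂ X be ν-measurable with 0 < ν(Ω) < ν(X) and ν(Ω) < ∞. Then h₁^m(Ω) = Λ₁^m(Ω), where Λ₁^m(Ω) := inf{ TV_m(u) : u ∈ L¹(X,ν), u = 0 ν-a.e. on X∖Ω, u ≥ 0 ν-a.e., ∫_X u dν = 1 }. -/
open MeasureTheory ENNReal Filter Set Topology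

section Helpers
open ProbabilityTheory

variable {X : Type*} [MeasurableSpace X]

/-- Reversibility implies `L_m(Eᶜ, E) = P_m(E)`. -/
lemma lm_compl_eq (m : X → Measure X) (ν : Measure X) (hrev : Reversible m ν)
    {E : Set X} (hE : MeasurableSet E) : Lm m ν Eᶜ E = Pm m ν E := by
  have hmeas : Measurable (Function.uncurry fun x y =>
      Eᶜ.indicator (1 : X → ℝ≥0∞) x * E.indicator (1 : X → ℝ≥0∞) y) :=
    ((measurable_const.indicator hE.compl).comp measurable_fst).mul
      ((measurable_const.indicator hE).comp measurable_snd)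
  have h := hrev (fun x y => Eᶜ.indicator 1 x * E.indicator 1 y) hmeas
  have hL : ∫⁻ x, ∫⁻ y, Eᶜ.indicator (1 : X → ℝ≥0∞) x * E.indicator 1 y ∂(m x) ∂ν
      = Lm m ν Eᶜ E := by
    have h1 : ∀ x, ∫⁻ y, Eᶜ.indicator (1 : X → ℝ≥0∞) x * E.indicator 1 y ∂(m x)
        = Eᶜ.indicator (fun x => m x E) x := by
      intro x
      rw [lintegral_const_mul' _ _ (by by_cases hx : x ∈ Eᶜ <;> simp [hx]),
        lintegral_indicator_one hE]
      by_cases hx : x ∈ Eᶜ <;> simp [hx]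
    rw [lintegral_congr h1, lintegral_indicator hE.compl]
    rfl
  have hR : ∫⁻ y, ∫⁻ x, Eᶜ.indicator (1 : X → ℝ≥0∞) x * E.indicator 1 y ∂(m y) ∂ν
      = Pm m ν E := by
    have h1 : ∀ y, ∫⁻ x, Eᶜ.indicator (1 : X → ℝ≥0∞) x * E.indicator 1 y ∂(m y)
        = E.indicator (fun y => m y Eᶜ) y := by
      intro y
      rw [lintegral_mul_const' _ _ (by by_cases hy : y ∈ E <;> simp [hy]),
        lintegral_indicator_one hE.compl]
      by_cases hy : y ∈ E <;> simp [hy, mul_comm]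
    rw [lintegral_congr h1, lintegral_indicator hE]
    rfl
  rw [← hL, ← hR]; exact h

/-- A `ν`-null set is `m_x`-null for `ν`-a.e. `x`. -/
lemma ae_kernel_null (m : X → Measure X) (hprob : ∀ x, IsProbabilityMeasure (m x))
    (hker : MeasurableKernel m) (ν : Measure X) (hrev : Reversible m ν)
    {N : Set X} (hN : MeasurableSet N) (hN0 : ν N = 0) : ∀ᵐ x ∂ν, m x N = 0 := by
  have hmeas : Measurable (Function.uncurry fun (_ : X) y => N.indicator (1 : X → ℝ≥0∞) y) :=
    (measurable_const.indicator hN).comp measurable_snd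
  have h := hrev (fun _ y => N.indicator 1 y) hmeas
  have hL : ∫⁻ x, ∫⁻ y, N.indicator (1 : X → ℝ≥0∞) y ∂(m x) ∂ν = ∫⁻ x, m x N ∂ν := by
    refine lintegral_congr fun x => ?_
    rw [lintegral_indicator_one hN]
  have hR : ∫⁻ y, ∫⁻ x, N.indicator (1 : X → ℝ≥0∞) y ∂(m y) ∂ν = 0 := by
    have h1 : ∀ y, ∫⁻ x, N.indicator (1 : X → ℝ≥0∞) y ∂(m y) = N.indicator 1 y := by
      intro y
      haveI := hprob y
      rw [lintegral_const, measure_univ, mul_one]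
    rw [lintegral_congr h1, lintegral_indicator hN]
    simp [setLIntegral_const, hN0]
  have hz : ∫⁻ x, m x N ∂ν = 0 := by rw [← hL, h, hR]
  have := (lintegral_eq_zero_iff (hker N hN)).mp hz
  filter_upwards [this] with x hx using hx

/-- `nlEnergy` only depends on the `ν`-a.e. class of `u` (by reversibility). -/
lemma nlEnergy_congr (m : X → Measure X) (hprob : ∀ x, IsProbabilityMeasure (m x))
    (hker : MeasurableKernel m) (ν : Measure X) (hrev : Reversible m ν)
    {u v : X → ℝ} (hu : Measurable u) (hv : Measurable v) (huv : u =ᵐ[ν] v) :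
    nlEnergy m ν u = nlEnergy m ν v := by
  set N : Set X := {x | u x ≠ v x} with hNdef
  have hNm : MeasurableSet N := (measurableSet_eq_fun hu hv).compl
  have hN0 : ν N = 0 := huv
  have hk := ae_kernel_null m hprob hker ν hrev hNm hN0
  refine lintegral_congr_ae ?_
  filter_upwards [hk, huv] with x hx hux
  refine lintegral_congr_ae ?_
  have hae : ∀ᵐ y ∂(m x), u y = v y := by
    rw [ae_iff]
    exact hx
  filter_upwards [hae] with y hy
  rw [hy, hux]

lemma layer_set_eq {a b : ℝ} :
    {t : ℝ | (t < a) ≠ (t < b)} = Set.Ico (min a b) (max a b) := by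
  ext t
  simp only [Set.mem_setOf_eq, Ne, eq_iff_iff, Set.mem_Ico, min_le_iff, lt_max_iff]
  by_cases h1 : t < a <;> by_cases h2 : t < b
  · simp [h1, h2, not_le.mpr h1, not_le.mpr h2]
  · simp [h1, h2, not_lt.mp h2]
  · simp [h1, h2, not_lt.mp h1]
  · simp [h1, h2]

lemma vol_layer {a b : ℝ} (ha : 0 ≤ a) (hb : 0 ≤ b) :
    (volume.restrict (Set.Ioi (0:ℝ))) {t : ℝ | (t < a) ≠ (t < b)}
      = ENNReal.ofReal |b - a| := by
  rw [layer_set_eq, Measure.restrict_apply measurableSet_Ico]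
  have habs : |b - a| = max a b - min a b := by
    rw [← max_sub_min_eq_abs, max_comm, min_comm]
  refine le_antisymm ?_ ?_
  · calc volume (Set.Ico (min a b) (max a b) ∩ Set.Ioi 0)
          ≤ volume (Set.Ico (min a b) (max a b)) := measure_mono Set.inter_subset_left
      _ = ENNReal.ofReal (max a b - min a b) := Real.volume_Ico
      _ = ENNReal.ofReal |b - a| := by rw [habs]
  · calc ENNReal.ofReal |b - a|
          = volume (Set.Ioo (min a b) (max a b)) := by rw [Real.volume_Ioo, habs]
      _ ≤ _ := by
          refine measure_mono ?_
          intro t ht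
          exact ⟨⟨le_of_lt ht.1, ht.2⟩, lt_of_le_of_lt (le_min ha hb) ht.1⟩

lemma nlEnergy_indicator (m : X → Measure X) (ν : Measure X) (hrev : Reversible m ν)
    {E : Set X} (hE : MeasurableSet E) {c : ℝ} (hc : 0 ≤ c) :
    nlEnergy m ν (E.indicator fun _ => c) = ENNReal.ofReal c * (2 * Pm m ν E) := by
  classical
  have key : ∀ x, (∫⁻ y, ENNReal.ofReal
        |E.indicator (fun _ => c) y - E.indicator (fun _ => c) x| ∂(m x))
      = if x ∈ E then ENNReal.ofReal c * m x Eᶜ else ENNReal.ofReal c * m x E := by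
    intro x
    by_cases hx : x ∈ E
    · rw [if_pos hx]
      have heq : (fun y => ENNReal.ofReal
            |E.indicator (fun _ => c) y - E.indicator (fun _ => c) x|)
          = Eᶜ.indicator fun _ => ENNReal.ofReal c := by
        funext y
        by_cases hy : y ∈ E
        · simp [Set.indicator_of_mem, hx, hy]
        · simp only [Set.indicator_of_notMem hy, Set.indicator_of_mem hx,
            Set.indicator_of_mem (Set.mem_compl hy), zero_sub, abs_neg, abs_of_nonneg hc]
      rw [heq, lintegral_indicator hE.compl, setLIntegral_const, mul_comm]
    · rw [if_neg hx]
      have heq : (fun y => ENNReal.ofReal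
            |E.indicator (fun _ => c) y - E.indicator (fun _ => c) x|)
          = E.indicator fun _ => ENNReal.ofReal c := by
        funext y
        by_cases hy : y ∈ E
        · simp only [Set.indicator_of_mem hy, Set.indicator_of_notMem hx, sub_zero,
            abs_of_nonneg hc]
        · simp [Set.indicator_of_notMem, hx, hy]
      rw [heq, lintegral_indicator hE, setLIntegral_const, mul_comm]
  unfold nlEnergy
  rw [lintegral_congr key, ← lintegral_add_compl _ hE]
  have hA : ∫⁻ x in E, (if x ∈ E then ENNReal.ofReal c * m x Eᶜ
        else ENNReal.ofReal c * m x E) ∂ν = ENNReal.ofReal c * Pm m ν E := by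
    rw [setLIntegral_congr_fun hE (fun x hx => if_pos hx),
      lintegral_const_mul' _ _ ENNReal.ofReal_ne_top]
    rfl
  have hB : ∫⁻ x in Eᶜ, (if x ∈ E then ENNReal.ofReal c * m x Eᶜ
        else ENNReal.ofReal c * m x E) ∂ν = ENNReal.ofReal c * Pm m ν E := by
    rw [setLIntegral_congr_fun hE.compl (fun x hx => if_neg hx),
      lintegral_const_mul' _ _ ENNReal.ofReal_ne_top]
    rw [show ∫⁻ x in Eᶜ, m x E ∂ν = Lm m ν Eᶜ E from rfl, lm_compl_eq m ν hrev hE]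
  rw [hA, hB, two_mul, mul_add]

/-- The key inequality: any admissible test function has total variation at least `h₁ᵐ(Ω)`. -/
lemma h1m_le_TVm (m : X → Measure X) (hprob : ∀ x, IsProbabilityMeasure (m x))
    (hker : MeasurableKernel m) (ν : Measure X) [SigmaFinite ν] (hrev : Reversible m ν)
    (Ω : Set X) (hΩ : MeasurableSet Ω) (h0 : 0 < ν Ω) (h2 : ν Ω < ⊤)
    {u : X → ℝ} (hum : Measurable u) (hui : Integrable u ν)
    (hsupp : ∀ᵐ x ∂ν, x ∉ Ω → u x = 0) (hnn : ∀ᵐ x ∂ν, 0 ≤ u x)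
    (hint : ∫ x, u x ∂ν = 1) :
    h1m m ν Ω ≤ TVm m ν u := by
  classical
  set h := h1m m ν Ω with hh
  -- `h` is finite
  have hPmΩ : Pm m ν Ω ≤ ν Ω := by
    have : ∫⁻ x in Ω, m x Ωᶜ ∂ν ≤ ∫⁻ x in Ω, 1 ∂ν := by
      refine lintegral_mono fun x => ?_
      haveI := hprob x
      exact prob_le_one
    simpa [Pm, Lm] using this
  have hht : h ≠ ⊤ := by
    have hmem : Pm m ν Ω / ν Ω ∈ {r : ℝ≥0∞ | ∃ E : Set X, MeasurableSet E ∧ E ⊆ Ω ∧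
        0 < ν E ∧ r = Pm m ν E / ν E} := ⟨Ω, hΩ, subset_rfl, h0, rfl⟩
    have hle : h ≤ Pm m ν Ω / ν Ω := sInf_le hmem
    exact (hle.trans_lt (ENNReal.div_lt_top (hPmΩ.trans_lt h2).ne h0.ne')).ne
  -- replace `u` by a pointwise-nonnegative representative supported in `Ω`
  set v : X → ℝ := Ω.indicator (fun x => max (u x) 0) with hv
  have hvm : Measurable v := (hum.max measurable_const).indicator hΩ
  have hv_nn : ∀ x, 0 ≤ v x := fun x => by
    by_cases hx : x ∈ Ω <;> simp [hv, hx, le_max_right]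
  have huv : u =ᵐ[ν] v := by
    filter_upwards [hsupp, hnn] with x hx1 hx2
    by_cases hx : x ∈ Ω
    · simp [hv, hx, max_eq_left hx2]
    · simp [hv, hx, hx1 hx]
  have hvi : Integrable v ν := hui.congr huv
  have hvint : ∫ x, v x ∂ν = 1 := by rw [← integral_congr_ae huv, hint]
  have hEcong : nlEnergy m ν u = nlEnergy m ν v :=
    nlEnergy_congr m hprob hker ν hrev hum hvm huv
  -- the kernel and the measure `π = ν ⊗ₘ κ`
  let κ : Kernel X X := ⟨m, Measure.measurable_of_measurable_coe m hker⟩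
  haveI : IsMarkovKernel κ := ⟨fun x => hprob x⟩
  set π := ν ⊗ₘ κ with hπ
  haveI : SFinite π := by rw [hπ]; infer_instance
  have hκ : ∀ x, κ x = m x := fun _ => rfl
  set E : ℝ → Set X := fun t => {x | t < v x} with hEdef
  have hEm : ∀ t, MeasurableSet (E t) := fun t => measurableSet_lt measurable_const hvm
  set T : Set ((X × X) × ℝ) := {q | (q.2 < v q.1.1) ≠ (q.2 < v q.1.2)} with hT
  have hs1 : MeasurableSet {q : (X × X) × ℝ | q.2 < v q.1.1} :=
    measurableSet_lt measurable_snd (hvm.comp (measurable_fst.comp measurable_fst))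
  have hs2 : MeasurableSet {q : (X × X) × ℝ | q.2 < v q.1.2} :=
    measurableSet_lt measurable_snd (hvm.comp (measurable_snd.comp measurable_fst))
  have hTm : MeasurableSet T := by
    have : T = ({q : (X × X) × ℝ | q.2 < v q.1.1} ∩ {q : (X × X) × ℝ | q.2 < v q.1.2}ᶜ)
        ∪ ({q : (X × X) × ℝ | q.2 < v q.1.2} ∩ {q : (X × X) × ℝ | q.2 < v q.1.1}ᶜ) := by
      ext q
      simp only [hT, Set.mem_setOf_eq, Ne, eq_iff_iff, Set.mem_union, Set.mem_inter_iff,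
        Set.mem_compl_iff]
      tauto
    rw [this]
    exact ((hs1.inter hs2.compl).union (hs2.inter hs1.compl))
  -- computing the measure of `T` by the two Fubini orders
  have key1 : (π.prod (volume.restrict (Set.Ioi (0:ℝ)))) T = nlEnergy m ν v := by
    rw [Measure.prod_apply hTm]
    have hsec : ∀ p : X × X, (volume.restrict (Set.Ioi (0:ℝ))) (Prod.mk p ⁻¹' T)
        = ENNReal.ofReal |v p.2 - v p.1| := by
      intro p
      have hpre : Prod.mk p ⁻¹' T = {t : ℝ | (t < v p.1) ≠ (t < v p.2)} := by
        ext t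
        rw [hT]
        simp only [Set.mem_preimage, Set.mem_setOf_eq]
      rw [hpre]
      exact vol_layer (hv_nn p.1) (hv_nn p.2)
    rw [lintegral_congr hsec, hπ,
      Measure.lintegral_compProd (f := fun p : X × X => ENNReal.ofReal |v p.2 - v p.1|)
        (((hvm.comp measurable_snd).sub (hvm.comp measurable_fst)).abs.ennreal_ofReal)]
    refine lintegral_congr fun x => ?_
    rw [hκ x]
  have key2 : ∀ t : ℝ, MeasurableSet {p : X × X | (t < v p.1) ≠ (t < v p.2)} := by
    intro t
    have ha : MeasurableSet {p : X × X | t < v p.1} :=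
      measurableSet_lt measurable_const (hvm.comp measurable_fst)
    have hb : MeasurableSet {p : X × X | t < v p.2} :=
      measurableSet_lt measurable_const (hvm.comp measurable_snd)
    have : {p : X × X | (t < v p.1) ≠ (t < v p.2)}
        = ({p : X × X | t < v p.1} ∩ {p : X × X | t < v p.2}ᶜ)
        ∪ ({p : X × X | t < v p.2} ∩ {p : X × X | t < v p.1}ᶜ) := by
      ext p
      simp only [Set.mem_setOf_eq, Ne, eq_iff_iff, Set.mem_union, Set.mem_inter_iff,
        Set.mem_compl_iff]
      tauto
    rw [this]
    exact ((ha.inter hb.compl).union (hb.inter ha.compl))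
  have key3 : ∀ t : ℝ, π {p : X × X | (t < v p.1) ≠ (t < v p.2)}
      = Pm m ν (E t) + Lm m ν (E t)ᶜ (E t) := by
    intro t
    rw [hπ, Measure.compProd_apply (key2 t)]
    have hsec : ∀ x, κ x (Prod.mk x ⁻¹' {p : X × X | (t < v p.1) ≠ (t < v p.2)})
        = if x ∈ E t then m x (E t)ᶜ else m x (E t) := by
      intro x
      by_cases hx : x ∈ E t
      · rw [if_pos hx]
        have hpre : Prod.mk x ⁻¹' {p : X × X | (t < v p.1) ≠ (t < v p.2)} = (E t)ᶜ := by
          ext y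
          have hx' : t < v x := hx
          simp [hEdef, Ne, eq_iff_iff, hx']
        rw [hpre, hκ x]
      · rw [if_neg hx]
        have hpre : Prod.mk x ⁻¹' {p : X × X | (t < v p.1) ≠ (t < v p.2)} = E t := by
          ext y
          have hx' : ¬ t < v x := hx
          simp [hEdef, Ne, eq_iff_iff, hx']
        rw [hpre, hκ x]
    rw [lintegral_congr hsec, ← lintegral_add_compl _ (hEm t)]
    congr 1
    · exact setLIntegral_congr_fun (hEm t) (fun x hx => if_pos hx)
    · exact setLIntegral_congr_fun (hEm t).compl (fun x hx => if_neg hx)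
  have hmono : ∀ t ∈ Set.Ioi (0:ℝ),
      2 * (h * ν (E t)) ≤ π {p : X × X | (t < v p.1) ≠ (t < v p.2)} := by
    intro t ht
    rw [key3 t, lm_compl_eq m ν hrev (hEm t)]
    have hPm : h * ν (E t) ≤ Pm m ν (E t) := by
      rcases eq_or_ne (ν (E t)) 0 with hz | hz
      · simp [hz]
      · have hsub : E t ⊆ Ω := by
          intro x hx
          by_contra hxo
          have hvx : v x = 0 := by simp [hv, Set.indicator_of_notMem hxo]
          have : (t : ℝ) < 0 := by rw [← hvx]; exact hx
          exact absurd ht (by simpa using this.le)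
        have hfin : ν (E t) ≠ ⊤ := ((measure_mono hsub).trans_lt h2).ne
        have hle : h ≤ Pm m ν (E t) / ν (E t) :=
          sInf_le ⟨E t, hEm t, hsub, pos_iff_ne_zero.mpr hz, rfl⟩
        calc h * ν (E t) ≤ (Pm m ν (E t) / ν (E t)) * ν (E t) := mul_le_mul_left hle _
          _ = Pm m ν (E t) := ENNReal.div_mul_cancel hz hfin
    calc 2 * (h * ν (E t)) ≤ 2 * Pm m ν (E t) := mul_le_mul_right hPm 2
      _ = Pm m ν (E t) + Pm m ν (E t) := two_mul _
  have key4 : (π.prod (volume.restrict (Set.Ioi (0:ℝ)))) T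
      = ∫⁻ t in Set.Ioi (0:ℝ), π {p : X × X | (t < v p.1) ≠ (t < v p.2)} := by
    rw [Measure.prod_apply_symm hTm]
    refine lintegral_congr fun t => ?_
    have hpre : (fun x => (x, t)) ⁻¹' T = {p : X × X | (t < v p.1) ≠ (t < v p.2)} := by
      ext p
      rw [hT]
      simp only [Set.mem_preimage, Set.mem_setOf_eq]
    rw [hpre]
  have hlayer : ∫⁻ t in Set.Ioi (0:ℝ), ν (E t) = 1 := by
    have hlc := lintegral_eq_lintegral_meas_lt ν (ae_of_all _ hv_nn) hvm.aemeasurable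
    rw [← hlc, ← ofReal_integral_eq_lintegral_ofReal hvi (ae_of_all _ hv_nn), hvint,
      ENNReal.ofReal_one]
  have main : 2 * h ≤ nlEnergy m ν v := by
    rw [← key1, key4]
    calc 2 * h = 2 * h * ∫⁻ t in Set.Ioi (0:ℝ), ν (E t) := by rw [hlayer, mul_one]
      _ = ∫⁻ t in Set.Ioi (0:ℝ), 2 * h * ν (E t) :=
          (lintegral_const_mul' _ _ (ENNReal.mul_ne_top ENNReal.ofNat_ne_top hht)).symm
      _ ≤ _ := by
          refine lintegral_mono_ae ?_
          rw [ae_restrict_iff' measurableSet_Ioi]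
          exact ae_of_all _ fun t ht => by rw [mul_assoc]; exact hmono t ht
  have hTV : TVm m ν u = 2⁻¹ * nlEnergy m ν v := by rw [TVm, hEcong]
  rw [hTV]
  calc h = 2⁻¹ * (2 * h) := by
        rw [← mul_assoc, ENNReal.inv_mul_cancel two_ne_zero ENNReal.ofNat_ne_top, one_mul]
    _ ≤ 2⁻¹ * nlEnergy m ν v := mul_le_mul_right main _

end Helpers
/-- The `m`-Cheeger constant of `Ω` coincides with the variational constant `Λ₁^m(Ω)`:
`h₁^m(Ω) = inf { TV_m(u) : u ∈ L¹(X,ν), u = 0 a.e. on X∖Ω, u ≥ 0 a.e., ∫ u dν = 1 }`. -/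
theorem h1m_eq_Lambda1m
    {X : Type*} [MetricSpace X] [PolishSpace X] [MeasurableSpace X] [BorelSpace X]
    (m : X → Measure X) (hprob : ∀ x, IsProbabilityMeasure (m x))
    (hker : MeasurableKernel m)
    (ν : Measure X) [SigmaFinite ν] (hrev : Reversible m ν)
    (hconn : MConnected m ν)
    (Ω : Set X) (hΩ : MeasurableSet Ω)
    (h0 : 0 < ν Ω) (h1 : ν Ω < ν Set.univ) (h2 : ν Ω < ⊤) :
    h1m m ν Ω =
      sInf {r : ℝ≥0∞ | ∃ u : X → ℝ, Measurable u ∧ Integrable u ν ∧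
        (∀ᵐ x ∂ν, x ∉ Ω → u x = 0) ∧ (∀ᵐ x ∂ν, 0 ≤ u x) ∧
        (∫ x, u x ∂ν) = 1 ∧ r = TVm m ν u} := by
  refine le_antisymm ?_ ?_
  · -- `h1m ≤ Λ₁`
    refine le_sInf ?_
    rintro r ⟨u, hum, hui, hsupp, hnn, hint, rfl⟩
    exact h1m_le_TVm m hprob hker ν hrev Ω hΩ h0 h2 hum hui hsupp hnn hint
  · -- `Λ₁ ≤ h1m`
    unfold h1m
    refine le_sInf ?_
    rintro r ⟨E, hE, hEΩ, hE0, rfl⟩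
    have hEfin : ν E ≠ ⊤ := ((measure_mono hEΩ).trans_lt h2).ne
    set c : ℝ := (ν E).toReal⁻¹ with hc
    have hc0 : 0 ≤ c := inv_nonneg.mpr ENNReal.toReal_nonneg
    have htne : (ν E).toReal ≠ 0 := ENNReal.toReal_ne_zero.mpr ⟨hE0.ne', hEfin⟩
    set u : X → ℝ := E.indicator (fun _ => c) with hu
    refine sInf_le ⟨u, measurable_const.indicator hE, ?_, ?_, ?_, ?_, ?_⟩
    · exact (integrable_indicator_iff hE).2
        (integrableOn_const ((measure_mono hEΩ).trans_lt h2).ne)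
    · exact ae_of_all _ fun x hx =>
        Set.indicator_of_notMem (fun hxE => hx (hEΩ hxE)) _
    · refine ae_of_all _ fun x => ?_
      by_cases hx : x ∈ E <;> simp [hu, hx, hc0]
    · rw [hu, integral_indicator_const c hE, smul_eq_mul, measureReal_def, hc, mul_inv_cancel₀ htne]
    · rw [TVm, hu, nlEnergy_indicator m ν hrev hE hc0, mul_left_comm,
        ← mul_assoc (2⁻¹ : ℝ≥0∞) 2 (Pm m ν E),
        ENNReal.inv_mul_cancel two_ne_zero ENNReal.ofNat_ne_top, one_mul, hc,
        ENNReal.ofReal_inv_of_pos (ENNReal.toReal_pos hE0.ne' hEfin),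
        ENNReal.ofReal_toReal hEfin, ← ENNReal.div_eq_inv_mul]
end

section
/- Let [X,d,m] be an m-connected metric random walk space with an invariant and reversible σ-finite measure ν, and let Ω ⊂ X be ν-measurable with 0 < ν(Ω) < ν(X) and ν(Ω) < ∞. If Ω is m-calibrable, then (1/ν(Ω)) ∫_Ω m_x(Ω) dν(x) ≤ 2 · ν-ess inf_{x∈Ω} m_x(Ω); equivalently, ν-ess sup_{x∈Ω} H^m_{∂Ω}(x) ≤ λ_Ω^m, where the m-mean curvature is H^m_{∂Ω}(x) := 1 − 2 m_x(Ω). -/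
open MeasureTheory ENNReal Filter Set Topology

section Aux

variable {X : Type*} [MeasurableSpace X]

/-- Reversibility applied to indicator functions of two measurable sets. -/
lemma rev_sets {m : X → Measure X} {ν : Measure X} (hrev : Reversible m ν)
    {A B : Set X} (hA : MeasurableSet A) (hB : MeasurableSet B) :
    ∫⁻ x in A, m x B ∂ν = ∫⁻ y in B, m y A ∂ν := by
  have hmeas : Measurable (Function.uncurry fun x y =>
      A.indicator (1 : X → ℝ≥0∞) x * B.indicator (1 : X → ℝ≥0∞) y) := by
    exact Measurable.mul ((measurable_one.indicator hA).comp measurable_fst)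
      ((measurable_one.indicator hB).comp measurable_snd)
  calc ∫⁻ x in A, m x B ∂ν
      = ∫⁻ x, A.indicator (fun x => m x B) x ∂ν := (lintegral_indicator hA _).symm
    _ = ∫⁻ x, ∫⁻ y, A.indicator (1 : X → ℝ≥0∞) x * B.indicator (1 : X → ℝ≥0∞) y ∂(m x) ∂ν := by
        refine lintegral_congr fun x => ?_
        rw [lintegral_const_mul _ (measurable_one.indicator hB), lintegral_indicator_one hB]
        by_cases hx : x ∈ A <;> simp [hx]
    _ = ∫⁻ y, ∫⁻ x, A.indicator (1 : X → ℝ≥0∞) x * B.indicator (1 : X → ℝ≥0∞) y ∂(m y) ∂ν :=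
        hrev _ hmeas
    _ = ∫⁻ y, B.indicator (fun y => m y A) y ∂ν := by
        refine lintegral_congr fun y => ?_
        rw [lintegral_mul_const _ (measurable_one.indicator hA), lintegral_indicator_one hA]
        by_cases hy : y ∈ B <;> simp [hy]
    _ = ∫⁻ y in B, m y A ∂ν := lintegral_indicator hB _

/-- Key estimate: if the sublevel set `{x ∈ Ω : m_x(Ω) ≤ t}` has positive measure and `Ω` is
calibrable, then `∫_Ω m_x(Ω) dν ≤ 2 t ν(Ω)`. -/
lemma key_bound (m : X → Measure X) (hprob : ∀ x, IsProbabilityMeasure (m x))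
    (hker : MeasurableKernel m) (ν : Measure X) (hrev : Reversible m ν)
    (Ω : Set X) (hΩ : MeasurableSet Ω)
    (h0 : 0 < ν Ω) (h2 : ν Ω < ⊤)
    (hcal : Calibrable m ν Ω)
    (t : ℝ≥0∞) (ht : t ≠ ⊤)
    (hD : 0 < ν (Ω ∩ {x | m x Ω ≤ t})) :
    (∫⁻ x in Ω, m x Ω ∂ν) ≤ 2 * t * ν Ω := by
  haveI := hprob
  have hf : Measurable fun x => m x Ω := hker Ω hΩ
  set D : Set X := Ω ∩ {x | m x Ω ≤ t} with hDdef
  have hDm : MeasurableSet D := hΩ.inter (hf measurableSet_Iic)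
  set E : Set X := Ω \ D with hEdef
  have hEm : MeasurableSet E := hΩ.diff hDm
  have hDsub : D ⊆ Ω := Set.inter_subset_left
  have hEsub : E ⊆ Ω := Set.diff_subset
  have hle1 : ∀ x, m x Ω ≤ 1 := fun x => prob_le_one
  -- generic bound for set integrals of functions bounded by 1
  have hbound : ∀ (S : Set X) (g : X → ℝ≥0∞), (∀ x, g x ≤ 1) → ∫⁻ x in S, g x ∂ν ≤ ν S := by
    intro S g hg
    calc ∫⁻ x in S, g x ∂ν ≤ ∫⁻ _ in S, 1 ∂ν := setLIntegral_mono measurable_const fun x _ => hg x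
      _ = ν S := setLIntegral_one _
  -- complement identity
  have hcompl : ∀ (S : Set X) (_ : S ⊆ Ω) (hSm : MeasurableSet S),
      (∫⁻ x in S, m x Ωᶜ ∂ν) + ∫⁻ x in S, m x Ω ∂ν = ν S := by
    intro S hS hSm
    rw [← lintegral_add_left (hker Ωᶜ hΩ.compl)]
    calc ∫⁻ x in S, (m x Ωᶜ + m x Ω) ∂ν = ∫⁻ _ in S, 1 ∂ν := by
          refine lintegral_congr fun x => ?_
          rw [add_comm, measure_add_measure_compl hΩ, measure_univ]
      _ = ν S := setLIntegral_one _
  -- notation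
  set W := ν Ω
  set dd := ν D with hdd
  set ee := ν E with hee
  set I := ∫⁻ x in Ω, m x Ω ∂ν with hI
  set ID := ∫⁻ x in D, m x Ω ∂ν with hID
  set IE := ∫⁻ x in E, m x Ω ∂ν with hIE
  set J := ∫⁻ x in D, m x E ∂ν with hJ
  set K := ∫⁻ x in E, m x Ωᶜ ∂ν with hK
  have F1 : dd + ee = W := by
    have h := measure_inter_add_diff (μ := ν) Ω hDm
    rwa [Set.inter_eq_self_of_subset_right hDsub] at h
  have F2 : ID + IE = I := by
    have h := lintegral_inter_add_diff (μ := ν) (fun x => m x Ω) Ω hDm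
    rwa [Set.inter_eq_self_of_subset_right hDsub] at h
  have F3 : Pm m ν Ω + I = W := hcompl Ω le_rfl hΩ
  have F5 : K + IE = ee := hcompl E hEsub hEm
  have F4 : Pm m ν E = K + J := by
    have hEc : ∀ x, m x Eᶜ = m x Ωᶜ + m x D := by
      intro x
      have : Eᶜ = Ωᶜ ∪ D := by
        rw [hEdef, Set.diff_eq, Set.compl_inter, compl_compl]
      rw [this, measure_union (disjoint_compl_left.mono_right hDsub) hDm]
    have hrevED : ∫⁻ x in E, m x D ∂ν = J := rev_sets hrev hEm hDm
    calc Pm m ν E = ∫⁻ x in E, (m x Ωᶜ + m x D) ∂ν := lintegral_congr fun x => hEc x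
      _ = K + ∫⁻ x in E, m x D ∂ν := lintegral_add_left (hker Ωᶜ hΩ.compl) _
      _ = K + J := by rw [hrevED]
  have F6 : J ≤ t * dd := by
    calc J ≤ ∫⁻ x in D, m x Ω ∂ν :=
          setLIntegral_mono hf fun x _ => measure_mono hEsub
      _ ≤ ∫⁻ _ in D, t ∂ν := setLIntegral_mono' hDm fun x hx => hx.2
      _ = t * dd := setLIntegral_const D t
  have F7 : ID ≤ t * dd := by
    calc ID ≤ ∫⁻ _ in D, t ∂ν := setLIntegral_mono' hDm fun x hx => hx.2
      _ = t * dd := setLIntegral_const D t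
  -- finiteness
  have hWtop : W ≠ ⊤ := h2.ne
  have hddtop : dd ≠ ⊤ := (lt_of_le_of_lt (measure_mono hDsub) h2).ne
  have heetop : ee ≠ ⊤ := (lt_of_le_of_lt (measure_mono hEsub) h2).ne
  have hItop : I ≠ ⊤ := (lt_of_le_of_lt (hbound Ω _ hle1) h2).ne
  have hIDtop : ID ≠ ⊤ := ((hbound D _ hle1).trans_lt (lt_of_le_of_lt (measure_mono hDsub) h2)).ne
  have hIEtop : IE ≠ ⊤ := ((hbound E _ hle1).trans_lt (lt_of_le_of_lt (measure_mono hEsub) h2)).ne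
  have hJtop : J ≠ ⊤ :=
    ((hbound D _ fun x => prob_le_one).trans_lt (lt_of_le_of_lt (measure_mono hDsub) h2)).ne
  have hKtop : K ≠ ⊤ :=
    ((hbound E _ fun x => prob_le_one).trans_lt (lt_of_le_of_lt (measure_mono hEsub) h2)).ne
  have hPOtop : Pm m ν Ω ≠ ⊤ := fun h => hWtop (by rw [← F3, h, top_add])
  have hPEtop : Pm m ν E ≠ ⊤ := by rw [F4]; exact ENNReal.add_ne_top.mpr ⟨hKtop, hJtop⟩
  have httd : t * dd ≠ ⊤ := ENNReal.mul_ne_top ht hddtop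
  -- case on ν E
  rcases eq_or_ne ee 0 with hee0 | hee0
  · -- E is null : I = ID ≤ t * ν D ≤ t * ν Ω ≤ 2 t ν Ω
    have hIE0 : IE = 0 := by
      have := hbound E _ hle1
      rw [← hee] at this  -- I ≤ ν E? no, IE ≤ ee
      exact le_antisymm (hee0 ▸ this) (zero_le)
    calc I = ID := by rw [← F2, hIE0, add_zero]
      _ ≤ t * dd := F7
      _ ≤ t * W := mul_le_mul_right (measure_mono hDsub) t
      _ ≤ 2 * t * W := by
          rw [two_mul, add_mul]
          exact le_add_self
  · -- main case
    have heepos : 0 < ee := pos_iff_ne_zero.mpr hee0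
    have F8 : Pm m ν Ω / W ≤ Pm m ν E / ee := by
      rw [← hcal]
      exact sInf_le ⟨E, hEm, hEsub, heepos, rfl⟩
    -- pass to the reals
    have pW : (0:ℝ) < W.toReal := ENNReal.toReal_pos h0.ne' hWtop
    have pd : (0:ℝ) < dd.toReal := ENNReal.toReal_pos hD.ne' hddtop
    have pe : (0:ℝ) < ee.toReal := ENNReal.toReal_pos hee0 heetop
    have r1 : dd.toReal + ee.toReal = W.toReal := by
      rw [← ENNReal.toReal_add hddtop heetop, F1]
    have r2 : ID.toReal + IE.toReal = I.toReal := by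
      rw [← ENNReal.toReal_add hIDtop hIEtop, F2]
    have r3 : (Pm m ν Ω).toReal + I.toReal = W.toReal := by
      rw [← ENNReal.toReal_add hPOtop hItop, F3]
    have r4 : (Pm m ν E).toReal = K.toReal + J.toReal := by
      rw [F4, ENNReal.toReal_add hKtop hJtop]
    have r5 : K.toReal + IE.toReal = ee.toReal := by
      rw [← ENNReal.toReal_add hKtop hIEtop, F5]
    have r6 : J.toReal ≤ t.toReal * dd.toReal := by
      have := ENNReal.toReal_mono httd F6
      rwa [ENNReal.toReal_mul] at this
    have r7 : ID.toReal ≤ t.toReal * dd.toReal := by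
      have := ENNReal.toReal_mono httd F7
      rwa [ENNReal.toReal_mul] at this
    have hPEdivtop : Pm m ν E / ee ≠ ⊤ := by
      simp [ENNReal.div_eq_top, hPEtop, hee0]
    have r8 : (Pm m ν Ω).toReal * ee.toReal ≤ (Pm m ν E).toReal * W.toReal := by
      have h := ENNReal.toReal_mono hPEdivtop F8
      rw [ENNReal.toReal_div, ENNReal.toReal_div] at h
      rwa [div_le_div_iff₀ pW pe] at h
    have hIDnn := ENNReal.toReal_nonneg (a := ID)
    have hIEnn := ENNReal.toReal_nonneg (a := IE)
    have hJnn := ENNReal.toReal_nonneg (a := J)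
    have hKnn := ENNReal.toReal_nonneg (a := K)
    have htnn := ENNReal.toReal_nonneg (a := t)
    -- the real inequality
    have main : I.toReal * dd.toReal ≤ (2 * t.toReal * W.toReal) * dd.toReal := by
      nlinarith [r8, r1, r2, r3, r4, r5,
        mul_le_mul_of_nonneg_right r6 pW.le,
        mul_le_mul_of_nonneg_right r6 pe.le,
        mul_le_mul_of_nonneg_right r6 pd.le,
        mul_le_mul_of_nonneg_right r7 pe.le,
        mul_le_mul_of_nonneg_right r7 pd.le]
    have mainr : I.toReal ≤ 2 * t.toReal * W.toReal := le_of_mul_le_mul_right main pd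
    have h2tW : 2 * t * W ≠ ⊤ := ENNReal.mul_ne_top (ENNReal.mul_ne_top (by simp) ht) hWtop
    rw [← ENNReal.toReal_le_toReal hItop h2tW]
    calc I.toReal ≤ 2 * t.toReal * W.toReal := mainr
      _ = (2 * t * W).toReal := by rw [ENNReal.toReal_mul, ENNReal.toReal_mul, ENNReal.toReal_ofNat]

end Aux

/-- If `Ω` is `m`-calibrable, then `(1/ν(Ω)) ∫_Ω m_x(Ω) dν(x) ≤ 2 · ν-essinf_{x∈Ω} m_x(Ω)`,
or, equivalently, `ν-esssup_{x∈Ω} H^m_{∂Ω}(x) ≤ λ_Ω^m` for the `m`-mean curvature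
`H^m_{∂Ω}(x) = 1 − 2 m_x(Ω)`. -/
theorem calibrable_curvature_bound
    {X : Type*} [MetricSpace X] [PolishSpace X] [MeasurableSpace X] [BorelSpace X]
    (m : X → Measure X) (hprob : ∀ x, IsProbabilityMeasure (m x))
    (hker : MeasurableKernel m)
    (ν : Measure X) [SigmaFinite ν] (hrev : Reversible m ν)
    (hconn : MConnected m ν)
    (Ω : Set X) (hΩ : MeasurableSet Ω)
    (h0 : 0 < ν Ω) (h1 : ν Ω < ν Set.univ) (h2 : ν Ω < ⊤)
    (hcal : Calibrable m ν Ω) :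
    (∫⁻ x in Ω, m x Ω ∂ν) / ν Ω ≤ 2 * essInf (fun x => m x Ω) (ν.restrict Ω) ∧
    essSup (fun x => 1 - 2 * (m x Ω).toReal) (ν.restrict Ω) ≤
      (Pm m ν Ω).toReal / (ν Ω).toReal := by
  haveI := hprob
  have hf : Measurable fun x => m x Ω := hker Ω hΩ
  have hWtop : ν Ω ≠ ⊤ := h2.ne
  have hres_ne : ν.restrict Ω ≠ 0 := by
    rw [Ne, Measure.restrict_eq_zero]; exact h0.ne'
  haveI : (ae (ν.restrict Ω)).NeBot := MeasureTheory.ae_neBot.mpr hres_ne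
  set β := essInf (fun x => m x Ω) (ν.restrict Ω) with hβdef
  have hβ1 : β ≤ 1 := by
    have h := essInf_mono_ae (μ := ν.restrict Ω) (f := fun x => m x Ω) (g := fun _ => (1:ℝ≥0∞))
      (Filter.Eventually.of_forall fun x => by haveI := hprob x; exact prob_le_one)
    rwa [essInf_const _ hres_ne] at h
  have hβtop : β ≠ ⊤ := (hβ1.trans_lt ENNReal.one_lt_top).ne
  set I := ∫⁻ x in Ω, m x Ω ∂ν with hIdef
  have goal1 : I / ν Ω ≤ 2 * β := by
    refine ENNReal.le_of_forall_pos_le_add fun ε hε _ => ?_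
    set t := β + ↑ε / 2 with htdef
    have httop : t ≠ ⊤ := by
      rw [htdef]
      exact ENNReal.add_ne_top.mpr ⟨hβtop, (ENNReal.div_lt_top (by simp) (by simp)).ne⟩
    have hβt : β < t := by
      rw [htdef]
      refine ENNReal.lt_add_right hβtop ?_
      simp [ENNReal.div_eq_zero_iff, hε.ne']
    have hDpos : 0 < ν (Ω ∩ {x | m x Ω ≤ t}) := by
      by_contra hcon
      have hz : ν (Ω ∩ {x | m x Ω ≤ t}) = 0 := le_antisymm (not_lt.mp hcon) (zero_le)
      have hz' : (ν.restrict Ω) {x | m x Ω ≤ t} = 0 := by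
        rw [Measure.restrict_apply (show MeasurableSet {x | m x Ω ≤ t} from hf measurableSet_Iic),
          Set.inter_comm]
        exact hz
      have hae : ∀ᵐ x ∂(ν.restrict Ω), t ≤ m x Ω := by
        have h' : ∀ᵐ x ∂(ν.restrict Ω), ¬ (m x Ω ≤ t) := ae_iff.mpr (by simpa using hz')
        exact h'.mono fun x hx => (lt_of_not_ge hx).le
      have hle : t ≤ β := by
        have h := essInf_mono_ae (μ := ν.restrict Ω) (f := fun _ => t) hae
        rwa [essInf_const _ hres_ne] at h
      exact absurd hle (not_le.mpr hβt)
    have hkey := key_bound m hprob hker ν hrev Ω hΩ h0 h2 hcal t httop hDpos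
    rw [ENNReal.div_le_iff h0.ne' hWtop]
    calc I ≤ 2 * t * ν Ω := hkey
      _ = (2 * β + ↑ε) * ν Ω := by
          rw [htdef, mul_add, ENNReal.mul_div_cancel' (by simp) (by simp)]
  refine ⟨goal1, ?_⟩
  have hPsum : Pm m ν Ω + I = ν Ω := by
    rw [show Pm m ν Ω = ∫⁻ x in Ω, m x Ωᶜ ∂ν from rfl, ← lintegral_add_left (hker Ωᶜ hΩ.compl)]
    calc ∫⁻ x in Ω, (m x Ωᶜ + m x Ω) ∂ν = ∫⁻ _ in Ω, 1 ∂ν :=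
          lintegral_congr fun x => by
            haveI := hprob x
            rw [add_comm, measure_add_measure_compl hΩ, measure_univ]
      _ = ν Ω := setLIntegral_one _
  have hItop : I ≠ ⊤ := by
    refine ((?_ : I ≤ ν Ω).trans_lt h2).ne
    calc I ≤ ∫⁻ _ in Ω, 1 ∂ν :=
          setLIntegral_mono measurable_const fun x _ => by haveI := hprob x; exact prob_le_one
      _ = ν Ω := setLIntegral_one _
  have hPOtop : Pm m ν Ω ≠ ⊤ := fun h => hWtop (by rw [← hPsum, h, top_add])
  have pW : (0:ℝ) < (ν Ω).toReal := ENNReal.toReal_pos h0.ne' hWtop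
  have rP : (Pm m ν Ω).toReal = (ν Ω).toReal - I.toReal := by
    have h := congrArg ENNReal.toReal hPsum
    rw [ENNReal.toReal_add hPOtop hItop] at h
    linarith
  have hIr : I.toReal / (ν Ω).toReal ≤ 2 * β.toReal := by
    have h2βtop : 2 * β ≠ ⊤ := ENNReal.mul_ne_top (by simp) hβtop
    have h := ENNReal.toReal_mono h2βtop goal1
    rwa [ENNReal.toReal_div, ENNReal.toReal_mul, ENNReal.toReal_ofNat] at h
  have hc : 1 - 2 * β.toReal ≤ (Pm m ν Ω).toReal / (ν Ω).toReal := by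
    rw [rP, sub_div, div_self pW.ne']
    linarith [hIr]
  have hae2 : ∀ᵐ x ∂(ν.restrict Ω), β ≤ m x Ω := ae_essInf_le
  have hev : ∀ᶠ x in ae (ν.restrict Ω),
      1 - 2 * (m x Ω).toReal ≤ (Pm m ν Ω).toReal / (ν Ω).toReal := by
    filter_upwards [hae2] with x hx
    haveI := hprob x
    have h1 : β.toReal ≤ (m x Ω).toReal := ENNReal.toReal_mono (measure_ne_top _ _) hx
    linarith [hc]
  have hcb : IsCoboundedUnder (· ≤ ·) (ae (ν.restrict Ω))
      (fun x => 1 - 2 * (m x Ω).toReal) := by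
    refine Filter.isCoboundedUnder_le_of_le _ (x := (-1 : ℝ)) fun x => ?_
    haveI := hprob x
    have h1 : (m x Ω).toReal ≤ 1 := by
      simpa using ENNReal.toReal_mono (by simp) (prob_le_one (μ := m x) (s := Ω))
    linarith
  exact limsup_le_of_le hcb hev
end

section
/- Let [X,d,m] be an m-connected metric random walk space with an invariant and reversible probability measure ν, and let Ω ⊂ X be ν-measurable with 0 < ν(Ω) ≤ 1/2. If h_m(X) = λ_Ω^m = P_m(Ω)/ν(Ω), then both Ω and X∖Ω are m-calibrable. -/
open MeasureTheory ENNReal Filter Set Topology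

/-- If `ν` is an invariant and reversible probability measure, `0 < ν(Ω) ≤ 1/2` and
`h_m(X) = λ_Ω^m = P_m(Ω)/ν(Ω)`, then both `Ω` and `X∖Ω` are `m`-calibrable. -/
theorem cheeger_attained_implies_calibrable
    {X : Type*} [MetricSpace X] [PolishSpace X] [MeasurableSpace X] [BorelSpace X]
    (m : X → Measure X) (hprob : ∀ x, IsProbabilityMeasure (m x))
    (hker : MeasurableKernel m)
    (ν : Measure X) [IsProbabilityMeasure ν] (hrev : Reversible m ν)
    (hconn : MConnected m ν)
    (Ω : Set X) (hΩ : MeasurableSet Ω)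
    (h0 : 0 < ν Ω) (hhalf : ν Ω ≤ 1 / 2)
    (heq : cheegerConst m ν = Pm m ν Ω / ν Ω) :
    Calibrable m ν Ω ∧ Calibrable m ν Ωᶜ := by
  have hΩc : MeasurableSet Ωᶜ := hΩ.compl
  have hhalflt1 : (1 : ℝ≥0∞) / 2 < 1 := ENNReal.half_lt_self one_ne_zero one_ne_top
  have hΩlt1 : ν Ω < 1 := lt_of_le_of_lt hhalf hhalflt1
  have hνc : ν Ωᶜ = 1 - ν Ω := by
    rw [measure_compl hΩ (measure_ne_top ν Ω), measure_univ]
  have h0c : 0 < ν Ωᶜ := by rw [hνc]; exact tsub_pos_of_lt hΩlt1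
  have hΩclt1 : ν Ωᶜ < 1 := by
    rw [hνc]; exact ENNReal.sub_lt_self one_ne_top one_ne_zero h0.ne'
  have hΩle : ν Ω ≤ ν Ωᶜ := by
    rw [hνc]
    calc ν Ω ≤ 1 / 2 := hhalf
      _ = 1 - 1 / 2 := (ENNReal.sub_half one_ne_top).symm
      _ ≤ 1 - ν Ω := tsub_le_tsub_left hhalf 1
  -- Perimeter of the complement equals perimeter, by reversibility.
  have hPmcompl : Pm m ν Ωᶜ = Pm m ν Ω := by
    have hmeas : Measurable (Function.uncurry fun x y =>
        Ωᶜ.indicator (1 : X → ℝ≥0∞) x * Ω.indicator (1 : X → ℝ≥0∞) y) :=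
      ((measurable_one.indicator hΩc).comp measurable_fst).mul
        ((measurable_one.indicator hΩ).comp measurable_snd)
    have hF := hrev _ hmeas
    have hL : ∫⁻ x, ∫⁻ y, Ωᶜ.indicator (1 : X → ℝ≥0∞) x * Ω.indicator (1 : X → ℝ≥0∞) y
        ∂(m x) ∂ν = Pm m ν Ωᶜ := by
      have h1 : ∀ x, ∫⁻ y, Ωᶜ.indicator (1 : X → ℝ≥0∞) x * Ω.indicator (1 : X → ℝ≥0∞) y
          ∂(m x) = Ωᶜ.indicator (fun x => m x Ω) x := by
        intro x
        rw [lintegral_const_mul' _ _ (by by_cases hx : x ∈ Ωᶜ <;> simp [hx]),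
          lintegral_indicator_one hΩ]
        by_cases hx : x ∈ Ωᶜ <;> simp [hx]
      simp_rw [h1]
      rw [lintegral_indicator hΩc]
      simp [Pm, Lm, compl_compl]
    have hR : ∫⁻ y, ∫⁻ x, Ωᶜ.indicator (1 : X → ℝ≥0∞) x * Ω.indicator (1 : X → ℝ≥0∞) y
        ∂(m y) ∂ν = Pm m ν Ω := by
      have h1 : ∀ y, ∫⁻ x, Ωᶜ.indicator (1 : X → ℝ≥0∞) x * Ω.indicator (1 : X → ℝ≥0∞) y
          ∂(m y) = Ω.indicator (fun y => m y Ωᶜ) y := by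
        intro y
        rw [lintegral_mul_const' _ _ (by by_cases hy : y ∈ Ω <;> simp [hy]),
          lintegral_indicator_one hΩc]
        by_cases hy : y ∈ Ω <;> simp [hy]
      simp_rw [h1]
      rw [lintegral_indicator hΩ]
      rfl
    rw [hL, hR] at hF
    exact hF
  constructor
  · -- Ω is calibrable
    apply le_antisymm
    · exact sInf_le ⟨Ω, hΩ, Set.Subset.rfl, h0, rfl⟩
    · apply le_sInf
      rintro r ⟨E, hE, hEΩ, hE0, rfl⟩
      have hEle : ν E ≤ 1 / 2 := le_trans (measure_mono hEΩ) hhalf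
      have hmin : min (ν E) (ν Eᶜ) = ν E := min_eq_left (by
        rw [measure_compl hE (measure_ne_top ν E), measure_univ]
        calc ν E ≤ 1 / 2 := hEle
          _ = 1 - 1 / 2 := (ENNReal.sub_half one_ne_top).symm
          _ ≤ 1 - ν E := tsub_le_tsub_left hEle 1)
      have hElt1 : ν E < 1 := lt_of_le_of_lt hEle hhalflt1
      have hch : cheegerConst m ν ≤ Pm m ν E / min (ν E) (ν Eᶜ) :=
        sInf_le ⟨E, hE, hE0, hElt1, rfl⟩
      rw [hmin, heq] at hch
      exact hch
  · -- Ωᶜ is calibrable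
    apply le_antisymm
    · exact sInf_le ⟨Ωᶜ, hΩc, Set.Subset.rfl, h0c, rfl⟩
    · apply le_sInf
      rintro r ⟨E, hE, hEΩc, hE0, rfl⟩
      rw [hPmcompl]
      have hEle : ν E ≤ ν Ωᶜ := measure_mono hEΩc
      have hElt1 : ν E < 1 := lt_of_le_of_lt hEle hΩclt1
      have hΩEc : ν Ω ≤ ν Eᶜ :=
        measure_mono (Set.subset_compl_comm.mp hEΩc)
      have hEc0 : 0 < ν Eᶜ := lt_of_lt_of_le h0 hΩEc
      have hch : cheegerConst m ν ≤ Pm m ν E / min (ν E) (ν Eᶜ) :=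
        sInf_le ⟨E, hE, hE0, hElt1, rfl⟩
      rw [heq] at hch
      rcases min_cases (ν E) (ν Eᶜ) with ⟨hm', _⟩ | ⟨hm', _⟩
      · rw [hm'] at hch
        calc Pm m ν Ω / ν Ωᶜ ≤ Pm m ν Ω / ν Ω := ENNReal.div_le_div_left hΩle _
          _ ≤ Pm m ν E / ν E := hch
      · rw [hm'] at hch
        have h1 : Pm m ν Ω / ν Ω * ν Eᶜ ≤ Pm m ν E := by
          rw [← ENNReal.le_div_iff_mul_le (Or.inl hEc0.ne')
            (Or.inl (measure_ne_top ν Eᶜ))]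
          exact hch
        have h2 : Pm m ν Ω ≤ Pm m ν E := by
          calc Pm m ν Ω = Pm m ν Ω / ν Ω * ν Ω :=
              (ENNReal.div_mul_cancel h0.ne' (measure_ne_top ν Ω)).symm
            _ ≤ Pm m ν Ω / ν Ω * ν Eᶜ := mul_le_mul_right hΩEc _
            _ ≤ Pm m ν E := h1
        calc Pm m ν Ω / ν Ωᶜ ≤ Pm m ν E / ν Ωᶜ := ENNReal.div_le_div_right h2 _
          _ ≤ Pm m ν E / ν E := ENNReal.div_le_div_left hEle _
end

section
/- Let [X,d,m] be an m-connected metric random walk space with an invariant and reversible probability measure ν (so that ν is ergodic). If (λ,u) is an m-eigenpair of the 1-Laplacian Δ₁^m, then λ ≠ 0 if and only if 0 ∈ med_ν(u), where med_ν(u) := {μ ∈ ℝ : ν({x : u(x) < μ}) ≤ 1/2 and ν({x : u(x) > μ}) ≤ 1/2}. -/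
open MeasureTheory ENNReal Filter Set Topology

section AuxLemmas

variable {X : Type*} [MeasurableSpace X]

lemma nlEnergy_add_const (m : X → Measure X) (ν : Measure X) (u : X → ℝ) (c : ℝ) :
    nlEnergy m ν (fun x => u x + c) = nlEnergy m ν u := by
  simp only [nlEnergy, add_sub_add_right_eq_sub]

lemma signSet_mem_bounds {r s : ℝ} (h : s ∈ signSet r) : -1 ≤ s ∧ s ≤ 1 := by
  unfold signSet at h
  split_ifs at h with h1 h2
  · simp only [Set.mem_singleton_iff] at h; constructor <;> simp [h]
  · simp only [Set.mem_singleton_iff] at h; constructor <;> simp [h]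
  · exact ⟨h.1, h.2⟩

lemma signSet_mem_pos {r s : ℝ} (h : s ∈ signSet r) (hr : 0 < r) : s = 1 := by
  unfold signSet at h
  rw [if_pos hr] at h
  exact h

lemma signSet_mem_neg {r s : ℝ} (h : s ∈ signSet r) (hr : r < 0) : s = -1 := by
  unfold signSet at h
  rw [if_neg (by linarith), if_pos hr] at h
  exact h

/-- If the nonlocal energy of `u` vanishes and the space is `m`-connected, then `u` is
a.e. constant. -/
lemma eq_const_of_nlEnergy_zero (m : X → Measure X)
    (hprob : ∀ x, IsProbabilityMeasure (m x))
    (hker : MeasurableKernel m) (ν : Measure X) [IsProbabilityMeasure ν]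
    (hconn : MConnected m ν) (u : X → ℝ) (hu : Measurable u)
    (hE : nlEnergy m ν u = 0) : ∃ c : ℝ, u =ᵐ[ν] fun _ => c := by
  have hm : Measurable m := Measure.measurable_of_measurable_coe m (fun A hA => hker A hA)
  let κ : ProbabilityTheory.Kernel X X := ⟨m, hm⟩
  have hκ : ProbabilityTheory.IsMarkovKernel κ := ⟨fun a => hprob a⟩
  have hfm : Measurable (Function.uncurry fun x y => ENNReal.ofReal |u y - u x|) := by
    apply ENNReal.measurable_ofReal.comp
    exact ((hu.comp measurable_snd).sub (hu.comp measurable_fst)).abs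
  have hg : Measurable fun x => ∫⁻ y, ENNReal.ofReal |u y - u x| ∂(m x) :=
    Measurable.lintegral_kernel_prod_right (κ := κ) hfm
  have h0 : ∀ᵐ x ∂ν, (∫⁻ y, ENNReal.ofReal |u y - u x| ∂(m x)) = 0 :=
    (lintegral_eq_zero_iff hg).mp hE
  have hne : ∀ᵐ x ∂ν, m x {y | u y ≠ u x} = 0 := by
    filter_upwards [h0] with x hx
    have hmeas : Measurable fun y => ENNReal.ofReal |u y - u x| :=
      ENNReal.measurable_ofReal.comp ((hu.sub measurable_const).abs)
    have h := (lintegral_eq_zero_iff hmeas).mp hx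
    have h' : (m x) {y | ¬ (ENNReal.ofReal |u y - u x| = 0)} = 0 := ae_iff.mp h
    refine measure_mono_null (fun y hy => ?_) h'
    simp only [Set.mem_setOf_eq] at hy ⊢
    intro hz
    rw [ENNReal.ofReal_eq_zero] at hz
    exact hy (by have := abs_nonneg (u y - u x); have : |u y - u x| = 0 := le_antisymm hz this
                 exact sub_eq_zero.mp (abs_eq_zero.mp this))
  by_cases hex : ∃ t : ℝ, 0 < ν {x | u x ≤ t} ∧ ν {x | u x ≤ t} < 1
  · exfalso
    obtain ⟨t, h1, h2⟩ := hex
    set B := {x | u x ≤ t} with hBdef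
    have hB : MeasurableSet B := measurableSet_le hu measurable_const
    have hApos : 0 < ν Bᶜ := by
      rw [measure_compl hB (measure_ne_top ν B), measure_univ]
      exact tsub_pos_of_lt h2
    have hpos := hconn Bᶜ B hB.compl hB hApos h1 (compl_union_self B)
    have hzero : Lm m ν Bᶜ B = 0 := by
      unfold Lm
      rw [lintegral_eq_zero_iff (hker B hB), Filter.EventuallyEq, ae_restrict_iff' hB.compl]
      filter_upwards [hne] with x hx hxA
      refine measure_mono_null (fun y hy => ?_) hx
      simp only [Set.mem_setOf_eq] at hy ⊢
      intro heq
      exact hxA (by simpa [hBdef, heq] using hy)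
    rw [hzero] at hpos
    exact lt_irrefl 0 hpos
  · push_neg at hex
    have hdi : ∀ t : ℝ, ν {x | u x ≤ t} = 0 ∨ ν {x | u x ≤ t} = 1 := by
      intro t
      rcases eq_or_lt_of_le (zero_le : (0:ℝ≥0∞) ≤ ν {x | u x ≤ t}) with h | h
      · exact Or.inl h.symm
      · exact Or.inr (le_antisymm prob_le_one (hex t h))
    have hTne : ∃ n : ℕ, ν {x | u x ≤ (n:ℝ)} = 1 := by
      by_contra hall
      push_neg at hall
      have hz : ∀ n : ℕ, ν {x | u x ≤ (n:ℝ)} = 0 := fun n => (hdi n).resolve_right (hall n)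
      have hcover : (⋃ n : ℕ, {x | u x ≤ (n:ℝ)}) = Set.univ := by
        ext x
        simp only [Set.mem_iUnion, Set.mem_setOf_eq, Set.mem_univ, iff_true]
        exact exists_nat_ge (u x)
      have := measure_iUnion_null_iff.mpr hz
      rw [hcover, measure_univ] at this
      exact one_ne_zero this
    obtain ⟨n₁, hn₁⟩ := hTne
    set T : Set ℝ := {t | ν {x | u x ≤ t} = 1} with hTdef
    have hTne' : T.Nonempty := ⟨(n₁ : ℝ), hn₁⟩
    have hlow : ∃ n : ℕ, ν {x | u x ≤ -(n:ℝ)} = 0 := by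
      by_contra hall
      push_neg at hall
      have hone : ∀ n : ℕ, ν {x | u x ≤ -(n:ℝ)} = 1 := fun n => (hdi _).resolve_left (hall n)
      have hcompl : ∀ n : ℕ, ν {x | u x ≤ -(n:ℝ)}ᶜ = 0 := fun n =>
        (prob_compl_eq_zero_iff (measurableSet_le hu measurable_const)).mpr (hone n)
      have hcover : (⋃ n : ℕ, {x | u x ≤ -(n:ℝ)}ᶜ) = Set.univ := by
        ext x
        simp only [Set.mem_iUnion, Set.mem_compl_iff, Set.mem_setOf_eq, Set.mem_univ, iff_true,
          not_le]
        obtain ⟨n, hn⟩ := exists_nat_gt (-u x)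
        exact ⟨n, by linarith⟩
      have := measure_iUnion_null_iff.mpr hcompl
      rw [hcover, measure_univ] at this
      exact one_ne_zero this
    obtain ⟨n₀, hn₀⟩ := hlow
    have hTbdd : BddBelow T := by
      refine ⟨-(n₀:ℝ), fun t ht => ?_⟩
      by_contra hlt
      push_neg at hlt
      have hmono : ν {x | u x ≤ t} ≤ ν {x | u x ≤ -(n₀:ℝ)} :=
        measure_mono (fun x hx => le_trans hx hlt.le)
      rw [ht, hn₀] at hmono
      exact one_ne_zero (le_antisymm hmono zero_le)
    set c := sInf T with hcdef
    have hge : ∀ ε : ℝ, 0 < ε → ν {x | u x ≤ c + ε} = 1 := by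
      intro ε hε
      obtain ⟨t, htT, htlt⟩ := exists_lt_of_csInf_lt hTne' (by linarith : sInf T < c + ε)
      have hmono : ν {x | u x ≤ t} ≤ ν {x | u x ≤ c + ε} :=
        measure_mono (fun x hx => le_trans hx htlt.le)
      rw [htT] at hmono
      exact le_antisymm prob_le_one hmono
    have hgt : ν {x | c < u x} = 0 := by
      have hsub : {x | c < u x} ⊆ ⋃ n : ℕ, {x | u x ≤ c + 1/((n:ℝ)+1)}ᶜ := by
        intro x hx
        obtain ⟨n, hn⟩ := exists_nat_one_div_lt (show (0:ℝ) < u x - c from sub_pos.mpr hx)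
        refine Set.mem_iUnion.mpr ⟨n, ?_⟩
        simp only [Set.mem_compl_iff, Set.mem_setOf_eq, not_le]
        linarith
      refine measure_mono_null hsub (measure_iUnion_null_iff.mpr fun n => ?_)
      exact (prob_compl_eq_zero_iff (measurableSet_le hu measurable_const)).mpr
        (hge _ (by positivity))
    have hlt : ν {x | u x < c} = 0 := by
      have hsub : {x | u x < c} ⊆ ⋃ n : ℕ, {x | u x ≤ c - 1/((n:ℝ)+1)} := by
        intro x hx
        obtain ⟨n, hn⟩ := exists_nat_one_div_lt (show (0:ℝ) < c - u x from sub_pos.mpr hx)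
        refine Set.mem_iUnion.mpr ⟨n, ?_⟩
        simp only [Set.mem_setOf_eq]
        linarith
      refine measure_mono_null hsub (measure_iUnion_null_iff.mpr fun n => ?_)
      rcases hdi (c - 1/((n:ℝ)+1)) with h | h
      · exact h
      · exfalso
        have hle : c ≤ c - 1/((n:ℝ)+1) := csInf_le hTbdd h
        have hp : (0:ℝ) < 1/((n:ℝ)+1) := by positivity
        linarith
    refine ⟨c, ?_⟩
    have hnull : ν {x | u x ≠ c} = 0 := by
      refine measure_mono_null (fun x hx => ?_) (measure_union_null hlt hgt)
      rcases lt_or_gt_of_ne hx with h | h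
      · exact Or.inl h
      · exact Or.inr h
    exact ae_iff.mpr hnull

end AuxLemmas

/-- If `(λ, u)` is an `m`-eigenpair of the 1-Laplacian on an `m`-connected metric random
walk space with invariant and reversible probability measure `ν`, then `λ ≠ 0` if and
only if `0` is a median of `u` with respect to `ν`. -/
theorem eigenvalue_ne_zero_iff_median
    {X : Type*} [MetricSpace X] [PolishSpace X] [MeasurableSpace X] [BorelSpace X]
    (m : X → Measure X) (hprob : ∀ x, IsProbabilityMeasure (m x))
    (hker : MeasurableKernel m)
    (ν : Measure X) [IsProbabilityMeasure ν] (hrev : Reversible m ν)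
    (hconn : MConnected m ν)
    (lam : ℝ) (u : X → ℝ) (heig : IsEigenpair m ν lam u) :
    lam ≠ 0 ↔ (ν {x | u x < 0} ≤ 1 / 2 ∧ ν {x | 0 < u x} ≤ 1 / 2) := by
  obtain ⟨hnorm, ξ, hξtop, hξsign, hsub⟩ := heig
  obtain ⟨huL2, hvL2, hBV, hineq⟩ := hsub
  obtain ⟨humeas, hufin⟩ := hBV
  have hPmeas : MeasurableSet {x | 0 < u x} := measurableSet_lt measurable_const humeas
  have hNmeas : MeasurableSet {x | u x < 0} := measurableSet_lt humeas measurable_const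
  have hb : ∀ᵐ x ∂ν, -1 ≤ ξ x ∧ ξ x ≤ 1 := by
    filter_upwards [hξsign] with x hx using signSet_mem_bounds hx
  constructor
  · intro hlam
    have hξint : Integrable ξ ν := hξtop.integrable le_top
    have key : ∀ t : ℝ, lam * t * ∫ x, ξ x ∂ν ≤ 0 := by
      intro t
      have hw2 : MemLp (fun x => u x + t) 2 ν := huL2.add (memLp_const t)
      have hwBV : MemBVm m ν (fun x => u x + t) :=
        ⟨humeas.add_const t, by rw [nlEnergy_add_const]; exact hufin⟩
      have h := hineq _ hw2 hwBV
      have hTV : TVm m ν (fun x => u x + t) = TVm m ν u := by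
        unfold TVm; rw [nlEnergy_add_const]
      rw [hTV] at h
      have hint : (∫ x, (lam * ξ x) * ((u x + t) - u x) ∂ν) = lam * t * ∫ x, ξ x ∂ν := by
        simp only [add_sub_cancel_left]
        have : (fun x => (lam * ξ x) * t) = fun x => (lam * t) * ξ x := by
          funext x; ring
        rw [this, integral_const_mul]
      rw [hint] at h
      linarith
    have hint0 : ∫ x, ξ x ∂ν = 0 := by
      have h1 := key 1
      have h2 := key (-1)
      have hz : lam * ∫ x, ξ x ∂ν = 0 := by nlinarith
      exact (mul_eq_zero.mp hz).resolve_left hlam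
    constructor
    · -- ν {u < 0} ≤ 1/2, use 1 - ξ
      have hI : Integrable (fun x => 1 - ξ x) ν := (integrable_const 1).sub hξint
      have hnn : 0 ≤ᵐ[ν] fun x => 1 - ξ x := by
        filter_upwards [hb] with x hx; simp only [Pi.zero_apply]; linarith [hx.2]
      have h1 : ∫ x in {x | u x < 0}, (1 - ξ x) ∂ν ≤ ∫ x, (1 - ξ x) ∂ν :=
        setIntegral_le_integral hI hnn
      have h2 : ∫ x, (1 - ξ x) ∂ν = 1 := by
        rw [integral_sub (integrable_const 1) hξint, hint0, integral_const]
        simp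
      have h3 : ∫ x in {x | u x < 0}, (1 - ξ x) ∂ν = 2 * (ν {x | u x < 0}).toReal := by
        rw [setIntegral_congr_ae hNmeas (g := fun _ => (2:ℝ)) ?_]
        · rw [setIntegral_const]; simp [mul_comm]; rfl
        · filter_upwards [hξsign] with x hx hxN
          rw [signSet_mem_neg hx hxN]; norm_num
      have h4 : (ν {x | u x < 0}).toReal ≤ 1/2 := by
        rw [h3] at h1; rw [h2] at h1; linarith
      rw [← ENNReal.toReal_le_toReal (measure_ne_top ν _) (by norm_num : (1/2:ℝ≥0∞) ≠ ⊤)] at *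
      convert h4 using 1
      norm_num
    · have hI : Integrable (fun x => ξ x + 1) ν := hξint.add (integrable_const 1)
      have hnn : 0 ≤ᵐ[ν] fun x => ξ x + 1 := by
        filter_upwards [hb] with x hx; simp only [Pi.zero_apply]; linarith [hx.1]
      have h1 : ∫ x in {x | 0 < u x}, (ξ x + 1) ∂ν ≤ ∫ x, (ξ x + 1) ∂ν :=
        setIntegral_le_integral hI hnn
      have h2 : ∫ x, (ξ x + 1) ∂ν = 1 := by
        rw [integral_add hξint (integrable_const 1), hint0, integral_const]
        simp
      have h3 : ∫ x in {x | 0 < u x}, (ξ x + 1) ∂ν = 2 * (ν {x | 0 < u x}).toReal := by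
        rw [setIntegral_congr_ae hPmeas (g := fun _ => (2:ℝ)) ?_]
        · rw [setIntegral_const]; simp [mul_comm]; rfl
        · filter_upwards [hξsign] with x hx hxP
          rw [signSet_mem_pos hx hxP]; norm_num
      have h4 : (ν {x | 0 < u x}).toReal ≤ 1/2 := by
        rw [h3] at h1; rw [h2] at h1; linarith
      rw [← ENNReal.toReal_le_toReal (measure_ne_top ν _) (by norm_num : (1/2:ℝ≥0∞) ≠ ⊤)]
      convert h4 using 1
      norm_num
  · intro hmed hlam0
    have hw2 : MemLp (fun _ : X => (0:ℝ)) 2 ν := memLp_const 0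
    have hwBV : MemBVm m ν (fun _ => (0:ℝ)) :=
      ⟨measurable_const, by simp [nlEnergy]⟩
    have h := hineq _ hw2 hwBV
    have hTV0 : TVm m ν (fun _ : X => (0:ℝ)) = 0 := by simp [TVm, nlEnergy]
    have hI0 : (∫ x, (lam * ξ x) * ((0:ℝ) - u x) ∂ν) = 0 := by
      subst hlam0; simp
    rw [hTV0, hI0] at h
    simp only [ENNReal.toReal_zero, add_zero] at h
    have hTVfin : TVm m ν u ≠ ⊤ :=
      ENNReal.mul_ne_top (by norm_num) hufin.ne
    have hTVz : TVm m ν u = 0 := by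
      have hge : 0 ≤ (TVm m ν u).toReal := ENNReal.toReal_nonneg
      have : (TVm m ν u).toReal = 0 := le_antisymm h hge
      rcases (ENNReal.toReal_eq_zero_iff _).mp this with h' | h'
      · exact h'
      · exact absurd h' hTVfin
    have hEz : nlEnergy m ν u = 0 := by
      unfold TVm at hTVz
      rcases mul_eq_zero.mp hTVz with h' | h'
      · exact absurd h' (by norm_num)
      · exact h'
    obtain ⟨c, hc⟩ := eq_const_of_nlEnergy_zero m hprob hker ν hconn u humeas hEz
    have hc1 : eLpNorm (fun _ : X => c) 1 ν = 1 := by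
      rw [← eLpNorm_congr_ae hc]; exact hnorm
    have hcne : c ≠ 0 := by
      rintro rfl
      rw [eLpNorm_zero'] at hc1
      exact zero_ne_one hc1
    have hhalf : (1:ℝ≥0∞)/2 < 1 := ENNReal.half_lt_self one_ne_zero one_ne_top
    rcases lt_or_gt_of_ne hcne with hcneg | hcpos
    · have hae : ∀ᵐ x ∂ν, u x < 0 := by
        filter_upwards [hc] with x hx; rw [hx]; exact hcneg
      have h1 : ν {x | u x < 0} = 1 := by
        rw [← prob_compl_eq_zero_iff hNmeas, Set.compl_setOf]
        exact ae_iff.mp hae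
      have := hmed.1
      rw [h1] at this
      exact absurd this (not_le.mpr hhalf)
    · have hae : ∀ᵐ x ∂ν, 0 < u x := by
        filter_upwards [hc] with x hx; rw [hx]; exact hcpos
      have h1 : ν {x | 0 < u x} = 1 := by
        rw [← prob_compl_eq_zero_iff hPmeas, Set.compl_setOf]
        exact ae_iff.mp hae
      have := hmed.2
      rw [h1] at this
      exact absurd this (not_le.mpr hhalf)
end

section
/- Let [X,d,m] be an m-connected metric random walk space with an invariant and reversible probability measure ν. If λ ≠ 0 is an m-eigenvalue of the 1-Laplacian Δ₁^m, i.e., there exists u ∈ L²(X,ν) such that (λ,u) is an m-eigenpair of Δ₁^m, then h_m(X) ≤ λ. -/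
open MeasureTheory ENNReal Filter Set Topology

noncomputable section AuxProofs

open MeasureTheory ENNReal Set Function ProbabilityTheory

namespace CheegerAux

variable {X : Type*} [MeasurableSpace X]

/-- Indicator-style level function: `ee u x t = 1` if `t < u x`, else `0`. -/
def ee (u : X → ℝ) (x : X) (t : ℝ) : ℝ≥0∞ := if t < u x then 1 else 0

lemma ee_ne_top (u : X → ℝ) (x : X) (t : ℝ) : ee u x t ≠ ⊤ := by
  unfold ee; split <;> simp

lemma one_sub_ee_ne_top (u : X → ℝ) (x : X) (t : ℝ) : 1 - ee u x t ≠ ⊤ := by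
  unfold ee; split <;> simp

lemma measurable_ee {u : X → ℝ} (hu : Measurable u) :
    Measurable (fun p : X × ℝ => ee u p.1 p.2) := by
  unfold ee
  exact Measurable.ite (measurableSet_lt measurable_snd (hu.comp measurable_fst))
    measurable_const measurable_const

lemma measurable_ee_fixed {u : X → ℝ} (hu : Measurable u) (t : ℝ) :
    Measurable (fun x => ee u x t) :=
  (measurable_ee hu).comp (measurable_id.prodMk measurable_const)

lemma lint_ee (μ : Measure X) {u : X → ℝ} (hu : Measurable u) (t : ℝ) :
    ∫⁻ x, ee u x t ∂μ = μ {x | t < u x} := by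
  have h : (fun x => ee u x t) = ({x | t < u x}).indicator (1 : X → ℝ≥0∞) := by
    funext x
    by_cases hx : t < u x <;> simp [ee, hx, Set.indicator]
  rw [h, lintegral_indicator_one (measurableSet_lt measurable_const hu)]

lemma lint_one_sub_ee (μ : Measure X) {u : X → ℝ} (hu : Measurable u) (t : ℝ) :
    ∫⁻ x, (1 - ee u x t) ∂μ = μ {x | t < u x}ᶜ := by
  have h : (fun x => 1 - ee u x t) = ({x | t < u x}ᶜ).indicator (1 : X → ℝ≥0∞) := by
    funext x
    by_cases hx : t < u x <;> simp [ee, hx, Set.indicator]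
  rw [h, lintegral_indicator_one (measurableSet_lt measurable_const hu).compl]

/-- The pointwise coarea identity on the line. -/
lemma lint_sep (a b : ℝ) :
    ∫⁻ t, ((if t < b then (1:ℝ≥0∞) else 0) * (1 - if t < a then (1:ℝ≥0∞) else 0)
      + (if t < a then (1:ℝ≥0∞) else 0) * (1 - if t < b then (1:ℝ≥0∞) else 0))
      = ENNReal.ofReal |b - a| := by
  have h1 : (fun t : ℝ => (if t < b then (1:ℝ≥0∞) else 0) * (1 - if t < a then (1:ℝ≥0∞) else 0))
      = (Ico a b).indicator 1 := by
    funext t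
    by_cases h2 : t < a
    · by_cases hb : t < b <;>
        simp [Set.indicator, Set.mem_Ico, hb, h2, not_le.mpr h2]
    · by_cases hb : t < b <;>
        simp [Set.indicator, Set.mem_Ico, hb, h2, not_lt.mp h2]
  have h2 : (fun t : ℝ => (if t < a then (1:ℝ≥0∞) else 0) * (1 - if t < b then (1:ℝ≥0∞) else 0))
      = (Ico b a).indicator 1 := by
    funext t
    by_cases h2 : t < b
    · by_cases hb : t < a <;>
        simp [Set.indicator, Set.mem_Ico, hb, h2, not_le.mpr h2]
    · by_cases hb : t < a <;>
        simp [Set.indicator, Set.mem_Ico, hb, h2, not_lt.mp h2]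
  calc ∫⁻ t, ((if t < b then (1:ℝ≥0∞) else 0) * (1 - if t < a then (1:ℝ≥0∞) else 0)
      + (if t < a then (1:ℝ≥0∞) else 0) * (1 - if t < b then (1:ℝ≥0∞) else 0))
      = ∫⁻ t, ((Ico a b).indicator 1 t + (Ico b a).indicator 1 t) := by
        refine lintegral_congr fun t => ?_
        rw [← congrFun h1 t, ← congrFun h2 t]
    _ = volume (Ico a b) + volume (Ico b a) := by
        rw [lintegral_add_left (measurable_one.indicator measurableSet_Ico),
          lintegral_indicator_one measurableSet_Ico, lintegral_indicator_one measurableSet_Ico]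
    _ = ENNReal.ofReal |b - a| := by
        rw [Real.volume_Ico, Real.volume_Ico]
        rcases le_total a b with h | h
        · rw [ENNReal.ofReal_of_nonpos (show a - b ≤ 0 by linarith),
            abs_of_nonneg (show (0:ℝ) ≤ b - a by linarith), add_zero]
        · rw [ENNReal.ofReal_of_nonpos (show b - a ≤ 0 by linarith),
            abs_of_nonpos (show b - a ≤ 0 by linarith), zero_add, neg_sub]


section Kernelish

variable {X : Type*} [MeasurableSpace X]

lemma measurable_lint_kernel (m : X → Measure X) (hprob : ∀ x, IsProbabilityMeasure (m x))
    (hker : MeasurableKernel m) {f : (X × ℝ) → X → ℝ≥0∞}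
    (hf : Measurable (Function.uncurry f)) :
    Measurable fun p : X × ℝ => ∫⁻ y, f p y ∂(m p.1) := by
  let κ : Kernel X X := ⟨m, Measure.measurable_of_measurable_coe m hker⟩
  haveI : IsMarkovKernel κ := ⟨hprob⟩
  have h : (fun p : X × ℝ => ∫⁻ y, f p y ∂(m p.1))
      = fun p => ∫⁻ y, f p y ∂((Kernel.comap (mγ := inferInstance) κ (Prod.fst : X × ℝ → X) measurable_fst) p) := by
    rfl
  rw [h]
  exact Measurable.lintegral_kernel_prod_right hf

lemma reversible_perim (m : X → Measure X) (ν : Measure X) (hrev : Reversible m ν)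
    {A : Set X} (hA : MeasurableSet A) : Lm m ν Aᶜ A = Lm m ν A Aᶜ := by
  have hF : Measurable (Function.uncurry fun x y =>
      A.indicator (1 : X → ℝ≥0∞) x * Aᶜ.indicator (1 : X → ℝ≥0∞) y) :=
    ((measurable_one.indicator hA).comp measurable_fst).mul
      ((measurable_one.indicator hA.compl).comp measurable_snd)
  have h := hrev _ hF
  have hL : ∫⁻ x, ∫⁻ y, A.indicator (1 : X → ℝ≥0∞) x * Aᶜ.indicator (1 : X → ℝ≥0∞) y ∂(m x) ∂ν
      = Lm m ν A Aᶜ := by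
    have h1 : ∀ x, ∫⁻ y, A.indicator (1 : X → ℝ≥0∞) x * Aᶜ.indicator (1 : X → ℝ≥0∞) y ∂(m x)
        = A.indicator (fun x => m x Aᶜ) x := by
      intro x
      rw [lintegral_const_mul' _ _ (by by_cases hx : x ∈ A <;> simp [hx]),
        lintegral_indicator_one hA.compl]
      by_cases hx : x ∈ A <;> simp [hx]
    rw [lintegral_congr h1, lintegral_indicator hA, Lm]
  have hR : ∫⁻ y, ∫⁻ x, A.indicator (1 : X → ℝ≥0∞) x * Aᶜ.indicator (1 : X → ℝ≥0∞) y ∂(m y) ∂ν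
      = Lm m ν Aᶜ A := by
    have h1 : ∀ y, ∫⁻ x, A.indicator (1 : X → ℝ≥0∞) x * Aᶜ.indicator (1 : X → ℝ≥0∞) y ∂(m y)
        = Aᶜ.indicator (fun y => m y A) y := by
      intro y
      rw [lintegral_mul_const' _ _ (by by_cases hy : y ∈ A <;> simp [hy]),
        lintegral_indicator_one hA]
      by_cases hy : y ∈ A <;> simp [hy]
    rw [lintegral_congr h1, lintegral_indicator hA.compl, Lm]
  rw [hL, hR] at h
  exact h.symm


lemma inner_lint (m : X → Measure X) {u : X → ℝ} (hu : Measurable u) (t : ℝ) (x : X) :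
    ∫⁻ y, (ee u y t * (1 - ee u x t) + ee u x t * (1 - ee u y t)) ∂(m x)
      = m x {z | t < u z} * (1 - ee u x t) + ee u x t * m x {z | t < u z}ᶜ := by
  rw [lintegral_add_left ((measurable_ee_fixed hu t).mul_const _),
    lintegral_mul_const' _ _ (one_sub_ee_ne_top u x t),
    lintegral_const_mul' _ _ (ee_ne_top u x t),
    lint_ee (m x) hu t, lint_one_sub_ee (m x) hu t]

lemma outer_lint (m : X → Measure X) (ν : Measure X) (hker : MeasurableKernel m)
    {u : X → ℝ} (hu : Measurable u) (t : ℝ) :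
    ∫⁻ x, (m x {z | t < u z} * (1 - ee u x t) + ee u x t * m x {z | t < u z}ᶜ) ∂ν
      = Lm m ν {z | t < u z}ᶜ {z | t < u z} + Lm m ν {z | t < u z} {z | t < u z}ᶜ := by
  have hE : MeasurableSet {z | t < u z} := measurableSet_lt measurable_const hu
  have h1 : ∀ x, m x {z | t < u z} * (1 - ee u x t) + ee u x t * m x {z | t < u z}ᶜ
      = ({z | t < u z}ᶜ).indicator (fun x => m x {z | t < u z}) x
        + ({z | t < u z}).indicator (fun x => m x {z | t < u z}ᶜ) x := by
    intro x
    by_cases hx : t < u x <;>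
      simp [ee, hx, Set.indicator, Set.mem_setOf_eq]
  rw [lintegral_congr h1,
    lintegral_add_left ((hker _ hE).indicator hE.compl),
    lintegral_indicator hE.compl, lintegral_indicator hE, Lm, Lm]

/-- Coarea formula for the nonlocal energy. -/
lemma coarea (m : X → Measure X) (hprob : ∀ x, IsProbabilityMeasure (m x))
    (hker : MeasurableKernel m) (ν : Measure X) [SFinite ν] {u : X → ℝ} (hu : Measurable u) :
    nlEnergy m ν u = ∫⁻ t, (Lm m ν {z | t < u z}ᶜ {z | t < u z}
      + Lm m ν {z | t < u z} {z | t < u z}ᶜ) := by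
  have hGmeas : Measurable (fun q : (X × ℝ) × X =>
      ee u q.2 q.1.2 * (1 - ee u q.1.1 q.1.2) + ee u q.1.1 q.1.2 * (1 - ee u q.2 q.1.2)) := by
    have h1 : Measurable fun q : (X × ℝ) × X => ee u q.2 q.1.2 :=
      (measurable_ee hu).comp (measurable_snd.prodMk (measurable_fst.snd))
    have h2 : Measurable fun q : (X × ℝ) × X => ee u q.1.1 q.1.2 :=
      (measurable_ee hu).comp measurable_fst
    exact (h1.mul (measurable_const.sub h2)).add (h2.mul (measurable_const.sub h1))
  calc nlEnergy m ν u
      = ∫⁻ x, ∫⁻ y, (∫⁻ t, (ee u y t * (1 - ee u x t) + ee u x t * (1 - ee u y t))) ∂(m x) ∂ν := by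
        unfold nlEnergy
        refine lintegral_congr fun x => lintegral_congr fun y => ?_
        exact (lint_sep (u x) (u y)).symm
    _ = ∫⁻ x, (∫⁻ t, ∫⁻ y, (ee u y t * (1 - ee u x t) + ee u x t * (1 - ee u y t)) ∂(m x)) ∂ν := by
        refine lintegral_congr fun x => ?_
        haveI := hprob x
        exact lintegral_lintegral_swap
          ((hGmeas.comp ((measurable_const.prodMk measurable_snd).prodMk
            measurable_fst : Measurable fun z : X × ℝ => ((x, z.2), z.1))).aemeasurable)
    _ = ∫⁻ t, ∫⁻ x, ∫⁻ y, (ee u y t * (1 - ee u x t) + ee u x t * (1 - ee u y t)) ∂(m x) ∂ν := by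
        exact lintegral_lintegral_swap
          ((measurable_lint_kernel m hprob hker
            (f := fun (p : X × ℝ) (y : X) => ee u y p.2 * (1 - ee u p.1 p.2)
              + ee u p.1 p.2 * (1 - ee u y p.2)) hGmeas).aemeasurable)
    _ = ∫⁻ t, (Lm m ν {z | t < u z}ᶜ {z | t < u z} + Lm m ν {z | t < u z} {z | t < u z}ᶜ) := by
        refine lintegral_congr fun t => ?_
        rw [lintegral_congr (fun x => inner_lint m hu t x), outer_lint m ν hker hu t]

/-- Layer-cake formula. -/
lemma layercake (ν : Measure X) [SFinite ν] {u : X → ℝ} (hu : Measurable u) :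
    ∫⁻ x, ENNReal.ofReal |u x| ∂ν
      = ∫⁻ t, (if t < 0 then ν {z | t < u z}ᶜ else ν {z | t < u z}) := by
  have hmeas : Measurable (fun p : X × ℝ =>
      ee u p.1 p.2 * (1 - if p.2 < (0:ℝ) then (1:ℝ≥0∞) else 0)
        + (if p.2 < (0:ℝ) then (1:ℝ≥0∞) else 0) * (1 - ee u p.1 p.2)) := by
    have h0 : Measurable fun p : X × ℝ => if p.2 < (0:ℝ) then (1:ℝ≥0∞) else 0 :=
      Measurable.ite (measurableSet_lt measurable_snd measurable_const)
        measurable_const measurable_const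
    exact ((measurable_ee hu).mul (measurable_const.sub h0)).add
      (h0.mul (measurable_const.sub (measurable_ee hu)))
  calc ∫⁻ x, ENNReal.ofReal |u x| ∂ν
      = ∫⁻ x, (∫⁻ t, (ee u x t * (1 - if t < (0:ℝ) then (1:ℝ≥0∞) else 0)
          + (if t < (0:ℝ) then (1:ℝ≥0∞) else 0) * (1 - ee u x t))) ∂ν := by
        refine lintegral_congr fun x => ?_
        have := lint_sep 0 (u x)
        rw [sub_zero] at this
        exact this.symm
    _ = ∫⁻ t, ∫⁻ x, (ee u x t * (1 - if t < (0:ℝ) then (1:ℝ≥0∞) else 0)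
          + (if t < (0:ℝ) then (1:ℝ≥0∞) else 0) * (1 - ee u x t)) ∂ν := by
        exact lintegral_lintegral_swap hmeas.aemeasurable
    _ = ∫⁻ t, (if t < 0 then ν {z | t < u z}ᶜ else ν {z | t < u z}) := by
        refine lintegral_congr fun t => ?_
        by_cases ht : t < 0
        · rw [if_pos ht, if_pos ht]
          rw [show (fun x => ee u x t * (1 - (1:ℝ≥0∞)) + 1 * (1 - ee u x t))
              = fun x => (1 - ee u x t) by funext x; simp]
          exact lint_one_sub_ee ν hu t
        · rw [if_neg ht, if_neg ht]
          rw [show (fun x => ee u x t * (1 - (0:ℝ≥0∞)) + 0 * (1 - ee u x t))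
              = fun x => ee u x t by funext x; simp]
          exact lint_ee ν hu t

/-- Measurability of the perimeter of superlevel sets. -/
lemma measurable_PmE (m : X → Measure X) (hprob : ∀ x, IsProbabilityMeasure (m x))
    (hker : MeasurableKernel m) (ν : Measure X) [SFinite ν] {u : X → ℝ} (hu : Measurable u) :
    Measurable fun t => Lm m ν {z | t < u z} {z | t < u z}ᶜ := by
  have hrw : (fun t => Lm m ν {z | t < u z} {z | t < u z}ᶜ)
      = fun t => ∫⁻ x, ee u x t * (∫⁻ y, (1 - ee u y t) ∂(m x)) ∂ν := by
    funext t
    have hE : MeasurableSet {z | t < u z} := measurableSet_lt measurable_const hu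
    rw [Lm, ← lintegral_indicator hE]
    refine lintegral_congr fun x => ?_
    rw [lint_one_sub_ee (m x) hu t]
    by_cases hx : t < u x <;> simp [ee, hx, Set.indicator, Set.mem_setOf_eq]
  rw [hrw]
  have hΦ : Measurable fun p : X × ℝ =>
      ee u p.1 p.2 * (∫⁻ y, (1 - ee u y p.2) ∂(m p.1)) := by
    refine (measurable_ee hu).mul ?_
    refine measurable_lint_kernel m hprob hker ?_
    exact measurable_const.sub ((measurable_ee hu).comp
      (measurable_snd.prodMk measurable_fst.snd))
  exact Measurable.lintegral_prod_left' hΦ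

end Kernelish

end CheegerAux

end AuxProofs

/-- If `λ ≠ 0` is an `m`-eigenvalue of the 1-Laplacian on an `m`-connected metric random
walk space with invariant and reversible probability measure `ν`, then `h_m(X) ≤ λ`. -/
theorem cheegerConst_le_eigenvalue
    {X : Type*} [MetricSpace X] [PolishSpace X] [MeasurableSpace X] [BorelSpace X]
    (m : X → Measure X) (hprob : ∀ x, IsProbabilityMeasure (m x))
    (hker : MeasurableKernel m)
    (ν : Measure X) [IsProbabilityMeasure ν] (hrev : Reversible m ν)
    (hconn : MConnected m ν)
    (lam : ℝ) (hlam : lam ≠ 0)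
    (u : X → ℝ) (heig : IsEigenpair m ν lam u) :
    cheegerConst m ν ≤ ENNReal.ofReal lam := by
  classical
  obtain ⟨hnorm, ξ, hξmem, hξsign, hu2, hv2, hBV, hineq⟩ := heig
  obtain ⟨umeas, hfin⟩ := hBV
  have hEt : ∀ t : ℝ, MeasurableSet {z | t < u z} :=
    fun t => measurableSet_lt measurable_const umeas
  have hfin' : nlEnergy m ν u ≠ ⊤ := hfin.ne
  have hTVfin : TVm m ν u ≠ ⊤ := by
    rw [TVm]; exact ENNReal.mul_ne_top (by simp) hfin'
  -- ξ is bounded by 1 in absolute value a.e.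
  have hξ_bd : ∀ᵐ x ∂ν, -1 ≤ ξ x ∧ ξ x ≤ 1 := by
    refine hξsign.mono fun x hx => ?_
    unfold signSet at hx
    split_ifs at hx with h1 h2
    · rw [Set.mem_singleton_iff] at hx; rw [hx]; norm_num
    · rw [Set.mem_singleton_iff] at hx; rw [hx]; norm_num
    · exact ⟨hx.1, hx.2⟩
  have hξint : Integrable ξ ν :=
    memLp_one_iff_integrable.mp (hξmem.mono_exponent le_top)
  have huint : Integrable u ν :=
    memLp_one_iff_integrable.mp (hu2.mono_exponent (by norm_num))
  -- ‖u‖₁ = 1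
  have hlint1 : ∫⁻ x, ENNReal.ofReal |u x| ∂ν = 1 := by
    have h := hnorm
    rw [eLpNorm_one_eq_lintegral_enorm] at h
    calc ∫⁻ x, ENNReal.ofReal |u x| ∂ν = ∫⁻ x, ‖u x‖ₑ ∂ν := by
          refine lintegral_congr fun x => ?_
          rw [Real.enorm_eq_ofReal_abs]
      _ = 1 := h
  have habs1 : ∫ x, |u x| ∂ν = 1 := by
    rw [integral_eq_lintegral_of_nonneg_ae (Filter.Eventually.of_forall fun x => abs_nonneg (u x))
      (umeas.abs.aestronglyMeasurable), hlint1, ENNReal.toReal_one]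
  -- subdifferential consequences
  have h₀ : (TVm m ν u).toReal ≤ ∫ x, (lam * ξ x) * u x ∂ν := by
    have h := hineq (fun _ => 0) (memLp_const 0) ⟨measurable_const, by simp [nlEnergy]⟩
    rw [show TVm m ν (fun _ => (0:ℝ)) = 0 by simp [TVm, nlEnergy]] at h
    simp only [zero_sub, mul_neg, integral_neg, ENNReal.toReal_zero] at h
    linarith
  have nl2 : nlEnergy m ν (fun x => 2 * u x) = 2 * nlEnergy m ν u := by
    unfold nlEnergy
    rw [← lintegral_const_mul' 2 _ (by simp)]
    refine lintegral_congr fun x => ?_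
    rw [← lintegral_const_mul' 2 _ (by simp)]
    refine lintegral_congr fun y => ?_
    have h2 : |2 * u y - 2 * u x| = 2 * |u y - u x| := by
      rw [show 2 * u y - 2 * u x = 2 * (u y - u x) by ring, abs_mul, abs_two]
    rw [h2, ENNReal.ofReal_mul (by norm_num)]
    norm_num
  have h₁ : ∫ x, (lam * ξ x) * u x ∂ν ≤ (TVm m ν u).toReal := by
    have h := hineq (fun x => 2 * u x) (hu2.const_mul 2)
      ⟨umeas.const_mul 2, by rw [nl2]; exact ENNReal.mul_lt_top (by norm_num) hfin⟩
    have hTV2 : TVm m ν (fun x => 2 * u x) = 2 * TVm m ν u := by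
      rw [TVm, nl2, TVm]; ring
    rw [hTV2, ENNReal.toReal_mul, ENNReal.toReal_ofNat] at h
    rw [show (fun x => (lam * ξ x) * (2 * u x - u x)) = fun x => (lam * ξ x) * u x from
      funext fun x => by ring] at h
    linarith
  -- ∫ ξ = 0
  have hshift : ∀ c : ℝ, nlEnergy m ν (fun x => u x + c) = nlEnergy m ν u := by
    intro c
    unfold nlEnergy
    refine lintegral_congr fun x => lintegral_congr fun y => ?_
    rw [show u y + c - (u x + c) = u y - u x by ring]
  have hc : ∀ c : ℝ, ∫ x, (lam * ξ x) * c ∂ν ≤ 0 := by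
    intro c
    have h := hineq (fun x => u x + c) (hu2.add (memLp_const c))
      ⟨umeas.add_const c, by rw [hshift c]; exact hfin⟩
    have hTVc : TVm m ν (fun x => u x + c) = TVm m ν u := by
      rw [TVm, hshift c, TVm]
    rw [hTVc, show (fun x => (lam * ξ x) * (u x + c - u x)) = fun x => (lam * ξ x) * c from
      funext fun x => by ring] at h
    linarith
  have hξ0 : ∫ x, ξ x ∂ν = 0 := by
    have e1 : lam * ∫ x, ξ x ∂ν ≤ 0 := by
      have := hc 1
      rw [show (fun x => (lam * ξ x) * (1:ℝ)) = fun x => lam * ξ x from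
        funext fun x => by ring, integral_const_mul] at this
      exact this
    have e2 : 0 ≤ lam * ∫ x, ξ x ∂ν := by
      have := hc (-1)
      rw [show (fun x => (lam * ξ x) * (-1:ℝ)) = fun x => -(lam * ξ x) from
        funext fun x => by ring, integral_neg, integral_const_mul] at this
      linarith
    rcases mul_eq_zero.mp (le_antisymm e1 e2) with h | h
    · exact absurd h hlam
    · exact h
  -- TV(u) = lam
  have hvu : ∫ x, (lam * ξ x) * u x ∂ν = lam := by
    have hpt : ∀ᵐ x ∂ν, ξ x * u x = |u x| := by
      refine hξsign.mono fun x hx => ?_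
      rcases lt_trichotomy (u x) 0 with h | h | h
      · unfold signSet at hx
        rw [if_neg (by linarith), if_pos h, Set.mem_singleton_iff] at hx
        rw [hx, abs_of_neg h]; ring
      · rw [h]; simp
      · unfold signSet at hx
        rw [if_pos h, Set.mem_singleton_iff] at hx
        rw [hx, abs_of_pos h]; ring
    calc ∫ x, (lam * ξ x) * u x ∂ν = ∫ x, lam * (ξ x * u x) ∂ν := by
          refine integral_congr_ae (Filter.Eventually.of_forall fun x => by ring)
      _ = lam * ∫ x, ξ x * u x ∂ν := integral_const_mul _ _
      _ = lam * ∫ x, |u x| ∂ν := by rw [integral_congr_ae hpt]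
      _ = lam := by rw [habs1, mul_one]
  have hTVu : (TVm m ν u).toReal = lam := le_antisymm (hvu ▸ h₀) (hvu ▸ h₁)
  have hlampos : 0 < lam := (hTVu ▸ ENNReal.toReal_nonneg).lt_of_ne (Ne.symm hlam)
  have hTVeq : TVm m ν u = ENNReal.ofReal lam := by
    rw [← hTVu, ENNReal.ofReal_toReal hTVfin]
  -- half-space bounds
  have hposhalf : ν {z | 0 < u z} ≤ 2⁻¹ := by
    have hAm : MeasurableSet {z | 0 < u z} := measurableSet_lt measurable_const umeas
    have h1 : ∫ x in {z | 0 < u z}, ξ x ∂ν = (ν {z | 0 < u z}).toReal := by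
      have hae : ∀ᵐ x ∂ν, x ∈ {z | 0 < u z} → ξ x = 1 := by
        refine hξsign.mono fun x hx hmem => ?_
        unfold signSet at hx
        rw [if_pos (show 0 < u x from hmem), Set.mem_singleton_iff] at hx
        exact hx
      rw [setIntegral_congr_ae hAm hae, setIntegral_const, smul_eq_mul, mul_one, measureReal_def]
    have h2 : -(ν {z | 0 < u z}ᶜ).toReal ≤ ∫ x in {z | 0 < u z}ᶜ, ξ x ∂ν := by
      have hm := integral_mono_ae (μ := ν.restrict {z | 0 < u z}ᶜ)
        (integrable_const (-1:ℝ)) hξint.restrict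
        (ae_restrict_of_ae (hξ_bd.mono fun x hx => hx.1))
      rw [integral_const] at hm
      simpa [measureReal_def] using hm
    have h3 : ∫ x in {z | 0 < u z}, ξ x ∂ν + ∫ x in {z | 0 < u z}ᶜ, ξ x ∂ν = 0 := by
      rw [integral_add_compl hAm hξint, hξ0]
    have h4 : (ν {z | 0 < u z}).toReal ≤ (ν {z | 0 < u z}ᶜ).toReal := by linarith
    have h5 : ν {z | 0 < u z} ≤ ν {z | 0 < u z}ᶜ :=
      (ENNReal.toReal_le_toReal (measure_ne_top ν _) (measure_ne_top ν _)).mp h4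
    have h6 : ν {z | 0 < u z} * 2 ≤ 1 := by
      rw [mul_two]
      calc ν {z | 0 < u z} + ν {z | 0 < u z} ≤ ν {z | 0 < u z} + ν {z | 0 < u z}ᶜ :=
            add_le_add_right h5 _
        _ = ν Set.univ := measure_add_measure_compl hAm
        _ = 1 := measure_univ
    exact ENNReal.le_inv_iff_mul_le.mpr h6
  have hneghalf : ν {z | u z < 0} ≤ 2⁻¹ := by
    have hBm : MeasurableSet {z | u z < 0} := measurableSet_lt umeas measurable_const
    have h1 : ∫ x in {z | u z < 0}, ξ x ∂ν = -(ν {z | u z < 0}).toReal := by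
      have hae : ∀ᵐ x ∂ν, x ∈ {z | u z < 0} → ξ x = -1 := by
        refine hξsign.mono fun x hx hmem => ?_
        unfold signSet at hx
        rw [if_neg (by simp only [Set.mem_setOf_eq] at hmem; linarith), if_pos (show u x < 0 from hmem),
          Set.mem_singleton_iff] at hx
        exact hx
      rw [setIntegral_congr_ae hBm hae, setIntegral_const, smul_eq_mul, mul_neg_one, measureReal_def]
    have h2 : ∫ x in {z | u z < 0}ᶜ, ξ x ∂ν ≤ (ν {z | u z < 0}ᶜ).toReal := by
      have hm := integral_mono_ae (μ := ν.restrict {z | u z < 0}ᶜ)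
        hξint.restrict (integrable_const (1:ℝ))
        (ae_restrict_of_ae (hξ_bd.mono fun x hx => hx.2))
      rw [integral_const] at hm
      simpa [measureReal_def] using hm
    have h3 : ∫ x in {z | u z < 0}, ξ x ∂ν + ∫ x in {z | u z < 0}ᶜ, ξ x ∂ν = 0 := by
      rw [integral_add_compl hBm hξint, hξ0]
    have h4 : (ν {z | u z < 0}).toReal ≤ (ν {z | u z < 0}ᶜ).toReal := by linarith
    have h5 : ν {z | u z < 0} ≤ ν {z | u z < 0}ᶜ :=
      (ENNReal.toReal_le_toReal (measure_ne_top ν _) (measure_ne_top ν _)).mp h4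
    have h6 : ν {z | u z < 0} * 2 ≤ 1 := by
      rw [mul_two]
      calc ν {z | u z < 0} + ν {z | u z < 0} ≤ ν {z | u z < 0} + ν {z | u z < 0}ᶜ :=
            add_le_add_right h5 _
        _ = ν Set.univ := measure_add_measure_compl hBm
        _ = 1 := measure_univ
    exact ENNReal.le_inv_iff_mul_le.mpr h6
  -- coarea: ∫⁻ t, Pm(E t) = ofReal lam
  have hsym : ∀ t : ℝ, Lm m ν {z | t < u z}ᶜ {z | t < u z} = Pm m ν {z | t < u z} :=
    fun t => CheegerAux.reversible_perim m ν hrev (hEt t)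
  have hco2 : nlEnergy m ν u = ∫⁻ t, 2 * Pm m ν {z | t < u z} := by
    rw [CheegerAux.coarea m hprob hker ν umeas]
    refine lintegral_congr fun t => ?_
    rw [hsym t, Pm, two_mul]
  have hPmInt : ∫⁻ t, Pm m ν {z | t < u z} = ENNReal.ofReal lam := by
    have hTVco : TVm m ν u = ∫⁻ t, Pm m ν {z | t < u z} := by
      rw [TVm, hco2, lintegral_const_mul' 2 _ (by simp), ← mul_assoc,
        ENNReal.inv_mul_cancel (by norm_num) (by norm_num), one_mul]
    rw [← hTVco, hTVeq]
  -- layer cake: ∫⁻ t, g t = 1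
  have hlc : ∫⁻ t, (if t < 0 then ν {z | t < u z}ᶜ else ν {z | t < u z}) = 1 := by
    rw [← CheegerAux.layercake ν umeas]
    exact hlint1
  -- min identity
  have hmin : ∀ t : ℝ, (if t < 0 then ν {z | t < u z}ᶜ else ν {z | t < u z})
      = min (ν {z | t < u z}) (ν {z | t < u z}ᶜ) := by
    intro t
    have hcompl : ν {z | t < u z}ᶜ = 1 - ν {z | t < u z} := by
      rw [measure_compl (hEt t) (measure_ne_top ν _), measure_univ]
    by_cases ht : t < 0
    · rw [if_pos ht]
      have hsubB : {z | t < u z}ᶜ ⊆ {z | u z < 0} := fun x hx => by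
        simp only [Set.mem_compl_iff, Set.mem_setOf_eq, not_lt] at hx ⊢
        exact lt_of_le_of_lt hx ht
      have hle : ν {z | t < u z}ᶜ ≤ 2⁻¹ := le_trans (measure_mono hsubB) hneghalf
      have hge : 2⁻¹ ≤ ν {z | t < u z} := by
        have hcc := measure_compl (hEt t).compl (measure_ne_top ν {z | t < u z}ᶜ)
        rw [compl_compl, measure_univ] at hcc
        rw [hcc]
        calc (2⁻¹ : ℝ≥0∞) = 1 - 2⁻¹ := ENNReal.one_sub_inv_two.symm
          _ ≤ 1 - ν {z | t < u z}ᶜ := tsub_le_tsub_left hle 1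
      exact (min_eq_right (le_trans hle hge)).symm
    · rw [if_neg ht]
      have hsubA : {z | t < u z} ⊆ {z | 0 < u z} := fun x hx =>
        lt_of_le_of_lt (not_lt.mp ht) hx
      have hle : ν {z | t < u z} ≤ 2⁻¹ := le_trans (measure_mono hsubA) hposhalf
      have hge : 2⁻¹ ≤ ν {z | t < u z}ᶜ := by
        rw [hcompl]
        calc (2⁻¹ : ℝ≥0∞) = 1 - 2⁻¹ := ENNReal.one_sub_inv_two.symm
          _ ≤ 1 - ν {z | t < u z} := tsub_le_tsub_left hle 1
      exact (min_eq_left (le_trans hle hge)).symm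
  -- final contradiction
  by_contra hcon
  rw [not_le] at hcon
  have hg0 : ∀ t : ℝ, ¬(0 < ν {z | t < u z} ∧ ν {z | t < u z} < 1) →
      (if t < 0 then ν {z | t < u z}ᶜ else ν {z | t < u z}) = 0 := by
    intro t hS
    rcases not_and_or.mp hS with h | h
    · have hz : ν {z | t < u z} = 0 := le_antisymm (not_lt.mp h) zero_le
      rw [hmin t, hz]
      simp
    · have h1 : ν {z | t < u z} = 1 := le_antisymm
        (le_trans (measure_mono (Set.subset_univ _)) (le_of_eq measure_univ)) (not_lt.mp h)
      have hz : ν {z | t < u z}ᶜ = 0 := by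
        rw [measure_compl (hEt t) (measure_ne_top ν _), measure_univ, h1, tsub_self]
      rw [hmin t, hz]
      simp
  have hkey : ∀ t : ℝ,
      ENNReal.ofReal lam * (if t < 0 then ν {z | t < u z}ᶜ else ν {z | t < u z})
        ≤ Pm m ν {z | t < u z} ∧
      ((0 < ν {z | t < u z} ∧ ν {z | t < u z} < 1) →
        ENNReal.ofReal lam * (if t < 0 then ν {z | t < u z}ᶜ else ν {z | t < u z})
          < Pm m ν {z | t < u z}) := by
    intro t
    by_cases hS : 0 < ν {z | t < u z} ∧ ν {z | t < u z} < 1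
    · have hmem : Pm m ν {z | t < u z} / min (ν {z | t < u z}) (ν {z | t < u z}ᶜ)
          ∈ {r : ℝ≥0∞ | ∃ D : Set X, MeasurableSet D ∧ 0 < ν D ∧ ν D < 1 ∧
            r = Pm m ν D / min (ν D) (ν Dᶜ)} :=
        ⟨{z | t < u z}, hEt t, hS.1, hS.2, rfl⟩
      have hlt : ENNReal.ofReal lam
          < Pm m ν {z | t < u z} / min (ν {z | t < u z}) (ν {z | t < u z}ᶜ) :=
        lt_of_lt_of_le hcon (sInf_le hmem)
      have hstrict := ENNReal.mul_lt_of_lt_div hlt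
      rw [← hmin t] at hstrict
      exact ⟨le_of_lt hstrict, fun _ => hstrict⟩
    · rw [hg0 t hS, mul_zero]
      exact ⟨zero_le, fun h => absurd h hS⟩
  -- measurability
  have hνE_anti : Antitone fun t : ℝ => ν {z | t < u z} := fun s t hst =>
    measure_mono fun x hx => lt_of_le_of_lt hst hx
  have hνEc_mono : Monotone fun t : ℝ => ν {z | t < u z}ᶜ := fun s t hst =>
    measure_mono (Set.compl_subset_compl.mpr fun x hx => lt_of_le_of_lt hst hx)
  have hg_meas : Measurable fun t : ℝ => (if t < 0 then ν {z | t < u z}ᶜ else ν {z | t < u z}) :=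
    Measurable.ite measurableSet_Iio hνEc_mono.measurable hνE_anti.measurable
  have hP_meas : Measurable fun t : ℝ => Pm m ν {z | t < u z} :=
    CheegerAux.measurable_PmE m hprob hker ν umeas
  -- integrals agree
  have hf1int : ∫⁻ t, ENNReal.ofReal lam
      * (if t < 0 then ν {z | t < u z}ᶜ else ν {z | t < u z}) = ENNReal.ofReal lam := by
    rw [lintegral_const_mul' _ _ ENNReal.ofReal_ne_top, hlc, mul_one]
  have hsubz : ∀ᵐ t : ℝ, Pm m ν {z | t < u z}
      ≤ ENNReal.ofReal lam * (if t < 0 then ν {z | t < u z}ᶜ else ν {z | t < u z}) := by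
    have hsub' := lintegral_sub (hg_meas.const_mul (ENNReal.ofReal lam))
      (by rw [hf1int]; exact ENNReal.ofReal_ne_top)
      (Filter.Eventually.of_forall fun t => (hkey t).1)
    rw [hPmInt, hf1int, tsub_self] at hsub'
    have hz := (lintegral_eq_zero_iff
      (hP_meas.sub (hg_meas.const_mul (ENNReal.ofReal lam)))).mp hsub'
    refine hz.mono fun t ht => ?_
    simp only [Pi.zero_apply] at ht
    exact tsub_eq_zero_iff_le.mp ht
  have hSnull : volume {t : ℝ | 0 < ν {z | t < u z} ∧ ν {z | t < u z} < 1} = 0 :=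
    measure_mono_null (fun t htS => not_le.mpr ((hkey t).2 htS)) (ae_iff.mp hsubz)
  have hgz : (fun t : ℝ => (if t < 0 then ν {z | t < u z}ᶜ else ν {z | t < u z}))
      =ᵐ[volume] 0 := by
    refine ae_iff.mpr (measure_mono_null ?_ hSnull)
    intro t ht
    simp only [Pi.zero_apply, Set.mem_setOf_eq] at ht
    by_contra hS
    exact ht (hg0 t hS)
  have hzero : (1 : ℝ≥0∞) = 0 := by
    rw [← hlc, lintegral_congr_ae hgz]
    simp
  exact one_ne_zero hzero
end
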